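/- arXiv:2412.07699 — 6 statements merged into one kernel-verified Lean document; each statement's English description precedes it below -/
import Mathlib

section
/- Let G, A, B be small profinite groups. If G × A is topologically isomorphic to G × B, then A is topologically isomorphic to B. -/
/-- Two topological groups are topologically isomorphic: there is a group isomorphism
which is a homeomorphism. -/
def IsTopIso (G H : Type*) [Group G] [TopologicalSpace G] [Group H]
    [TopologicalSpace H] : Prop :=
  ∃ e : G ≃* H, Continuous e ∧ Continuous e.symm

/-- A topological group is *small* if for every `n : ℕ` it has only finitely many
open normal subgroups of index `n`. -/
def SmallGroup (G : Type*) [Group G] [TopologicalSpace G] : Prop :=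
  ∀ n : ℕ, {H : Subgroup G | H.Normal ∧ IsOpen (H : Set G) ∧ H.index = n}.Finite

/-- A topological group is *indecomposable* if whenever it is topologically isomorphic
to a direct product `A × B` of profinite groups, `A` or `B` is trivial. -/
def Indecomposable (G : Type*) [Group G] [TopologicalSpace G] : Prop :=
  ∀ (A B : Type) [Group A] [TopologicalSpace A] [IsTopologicalGroup A] [CompactSpace A]
    [T2Space A] [TotallyDisconnectedSpace A]
    [Group B] [TopologicalSpace B] [IsTopologicalGroup B] [CompactSpace B]
    [T2Space B] [TotallyDisconnectedSpace B],
    IsTopIso G (A × B) → (∀ a : A, a = 1) ∨ (∀ b : B, b = 1)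

/-- A bundled profinite group: a compact, Hausdorff, totally disconnected topological group. -/
structure ProfiniteGroup where
  carrier : Type
  [group : Group carrier]
  [topology : TopologicalSpace carrier]
  [topGroup : IsTopologicalGroup carrier]
  [compact : CompactSpace carrier]
  [t2 : T2Space carrier]
  [td : TotallyDisconnectedSpace carrier]

attribute [instance] ProfiniteGroup.group ProfiniteGroup.topology ProfiniteGroup.topGroup
  ProfiniteGroup.compact ProfiniteGroup.t2 ProfiniteGroup.td

section Aux

open Function

section FiniteCancel

/-- Homs into a product split. -/
def homProdEquiv (C M N : Type) [Group C] [Group M] [Group N] :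
    (C →* M × N) ≃ (C →* M) × (C →* N) where
  toFun f := ((MonoidHom.fst M N).comp f, (MonoidHom.snd M N).comp f)
  invFun p := p.1.prod p.2
  left_inv f := by ext x <;> rfl
  right_inv p := by cases p; dsimp; constructor <;> ext x <;> rfl

/-- Composition with a `MulEquiv` is an `Equiv` on hom sets. -/
def homCompEquiv (C : Type) [Group C] {M N : Type} [Group M] [Group N] (e : M ≃* N) :
    (C →* M) ≃ (C →* N) where
  toFun f := e.toMonoidHom.comp f
  invFun f := e.symm.toMonoidHom.comp f
  left_inv f := by ext x; simp
  right_inv f := by ext x; simp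

/-- Homs with kernel `N` correspond to injective homs from the quotient. -/
noncomputable def kerFiberEquiv {C : Type} [Group C] (N : Subgroup C) [N.Normal]
    (A : Type) [Group A] :
    {f : C →* A // f.ker = N} ≃ {g : C ⧸ N →* A // Injective g} where
  toFun f := ⟨QuotientGroup.lift N f.1 (fun x hx => by
      have hx' : x ∈ f.1.ker := by rw [f.2]; exact hx
      exact hx'), by
    intro x y hxy
    induction x using QuotientGroup.induction_on
    induction y using QuotientGroup.induction_on
    rename_i x y
    simp only [QuotientGroup.lift_mk] at hxy
    rw [QuotientGroup.eq]
    rw [← f.2, MonoidHom.mem_ker, map_mul, map_inv, hxy, inv_mul_cancel]⟩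
  invFun g := ⟨g.1.comp (QuotientGroup.mk' N), by
    ext x
    simp only [MonoidHom.mem_ker, MonoidHom.comp_apply]
    constructor
    · intro hx
      have h1 : ((x : C) : C ⧸ N) = 1 := by
        apply g.2
        rw [map_one]
        simpa using hx
      exact (QuotientGroup.eq_one_iff x).mp h1
    · intro hx
      rw [QuotientGroup.mk'_apply, (QuotientGroup.eq_one_iff x).mpr hx, map_one]⟩
  left_inv f := by
    apply Subtype.ext
    ext x
    rfl
  right_inv g := by
    apply Subtype.ext
    ext x
    rfl

/-- Non-injective homs are classified by their (nontrivial) kernel. -/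
def nonInjEquiv {C : Type} [Group C] (A : Type) [Group A] :
    {f : C →* A // ¬Injective f} ≃
      Σ N : {N : Subgroup C // N ≠ ⊥}, {f : C →* A // f.ker = N.1} where
  toFun f := ⟨⟨f.1.ker, fun h => f.2 ((MonoidHom.ker_eq_bot_iff f.1).mp h)⟩, ⟨f.1, rfl⟩⟩
  invFun S := ⟨S.2.1, fun hInj => S.1.2 (S.2.2 ▸ (MonoidHom.ker_eq_bot_iff S.2.1).mpr hInj)⟩
  left_inv f := rfl
  right_inv := by rintro ⟨⟨N, hN⟩, ⟨f, hf⟩⟩; dsimp at hf ⊢; subst hf; rfl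

instance {C A : Type} [Group C] [Group A] [Finite C] [Finite A] : Finite (C →* A) :=
  Finite.of_injective (fun f => (f : C → A)) DFunLike.coe_injective

instance {C : Type} [Group C] [Finite C] : Finite (Subgroup C) :=
  Finite.of_injective (fun H => (H : Set C)) SetLike.coe_injective

lemma injCard_eq (A B : Type) [Group A] [Group B] [Finite A] [Finite B]
    (h : ∀ (C : Type) [Group C] [Finite C], Nat.card (C →* A) = Nat.card (C →* B)) :
    ∀ (n : ℕ) (C : Type) [Group C] [Finite C], Nat.card C ≤ n →
      Nat.card {f : C →* A // Injective f} = Nat.card {f : C →* B // Injective f} := by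
  intro n
  induction n with
  | zero =>
    intro C _ _ hC
    exact absurd (Nat.card_pos (α := C)) (by omega)
  | succ n ih =>
    intro C _ _ hC
    have hfib : ∀ N : {N : Subgroup C // N ≠ ⊥},
        Nat.card {f : C →* A // f.ker = N.1} = Nat.card {f : C →* B // f.ker = N.1} := by
      rintro ⟨N, hN⟩
      by_cases hnorm : N.Normal
      · haveI := hnorm
        rw [Nat.card_congr (kerFiberEquiv N A), Nat.card_congr (kerFiberEquiv N B)]
        have hcard : Nat.card C = Nat.card (C ⧸ N) * Nat.card N :=
          Subgroup.card_eq_card_quotient_mul_card_subgroup N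
        have h2 : 1 < Nat.card N := (Subgroup.one_lt_card_iff_ne_bot N).mpr hN
        have hq : 0 < Nat.card (C ⧸ N) := Nat.card_pos
        have : Nat.card (C ⧸ N) ≤ n := by nlinarith
        exact ih (C ⧸ N) this
      · have hA : IsEmpty {f : C →* A // f.ker = N} :=
          ⟨fun f => hnorm (f.2 ▸ f.1.normal_ker)⟩
        have hB : IsEmpty {f : C →* B // f.ker = N} :=
          ⟨fun f => hnorm (f.2 ▸ f.1.normal_ker)⟩
        rw [Nat.card_of_isEmpty, Nat.card_of_isEmpty]
    have hni : Nat.card {f : C →* A // ¬Injective f}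
        = Nat.card {f : C →* B // ¬Injective f} := by
      rw [Nat.card_congr (nonInjEquiv A), Nat.card_congr (nonInjEquiv B)]
      have : ∀ N : {N : Subgroup C // N ≠ ⊥},
          Nonempty ({f : C →* A // f.ker = N.1} ≃ {f : C →* B // f.ker = N.1}) :=
        fun N => Finite.card_eq.mp (hfib N)
      have eq : ∀ N : {N : Subgroup C // N ≠ ⊥},
          {f : C →* A // f.ker = N.1} ≃ {f : C →* B // f.ker = N.1} :=
        fun N => (this N).some
      exact Nat.card_congr (Equiv.sigmaCongrRight eq)
    have hdA : Nat.card (C →* A)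
        = Nat.card {f : C →* A // Injective f} + Nat.card {f : C →* A // ¬Injective f} := by
      classical
      rw [← Nat.card_sum]
      exact Nat.card_congr (Equiv.sumCompl (fun f : C →* A => Injective f)).symm
    have hdB : Nat.card (C →* B)
        = Nat.card {f : C →* B // Injective f} + Nat.card {f : C →* B // ¬Injective f} := by
      classical
      rw [← Nat.card_sum]
      exact Nat.card_congr (Equiv.sumCompl (fun f : C →* B => Injective f)).symm
    have := h C
    omega

/-- Cancellation for finite groups. -/
lemma finite_cancel {G A B : Type} [Group G] [Group A] [Group B] [Finite G] [Finite A] [Finite B]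
    (e : (G × A) ≃* (G × B)) : Nonempty (A ≃* B) := by
  have h : ∀ (C : Type) [Group C] [Finite C], Nat.card (C →* A) = Nat.card (C →* B) := by
    intro C _ _
    have h1 : Nat.card (C →* G × A) = Nat.card (C →* G × B) :=
      Nat.card_congr (homCompEquiv C e)
    rw [Nat.card_congr (homProdEquiv C G A), Nat.card_congr (homProdEquiv C G B),
      Nat.card_prod, Nat.card_prod] at h1
    have hpos : 0 < Nat.card (C →* G) := Nat.card_pos
    exact Nat.eq_of_mul_eq_mul_left hpos h1
  have h1 := injCard_eq A B h (Nat.card A) A le_rfl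
  have h2 := injCard_eq B A (fun C _ _ => (h C).symm) (Nat.card B) B le_rfl
  have hA : Nat.card {f : A →* A // Injective f} ≠ 0 :=
    Nat.card_ne_zero.mpr ⟨⟨⟨MonoidHom.id A, injective_id⟩⟩, inferInstance⟩
  have hB : Nat.card {f : B →* B // Injective f} ≠ 0 :=
    Nat.card_ne_zero.mpr ⟨⟨⟨MonoidHom.id B, injective_id⟩⟩, inferInstance⟩
  rw [h1] at hA
  rw [h2] at hB
  obtain ⟨f, hf⟩ := (Nat.card_ne_zero.mp hA).1.some
  obtain ⟨g, hg⟩ := (Nat.card_ne_zero.mp hB).1.some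
  have hcard : Nat.card A = Nat.card B :=
    le_antisymm (Nat.card_le_card_of_injective f hf) (Nat.card_le_card_of_injective g hg)
  exact ⟨MulEquiv.ofBijective f ((Nat.bijective_iff_injective_and_card f).mpr ⟨hf, hcard⟩)⟩

end FiniteCancel


section Profinite

/-- The set of open normal subgroups of index at most `n` (and positive index). -/
def nSet (n : ℕ) (G : Type) [Group G] [TopologicalSpace G] : Set (Subgroup G) :=
  {H | H.Normal ∧ IsOpen (H : Set G) ∧ H.index ≤ n ∧ H.index ≠ 0}

/-- The intersection of all open normal subgroups of index at most `n`. -/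
def nK (n : ℕ) (G : Type) [Group G] [TopologicalSpace G] : Subgroup G :=
  sInf (nSet n G)

variable {G A : Type}

instance nK_normal (n : ℕ) (G : Type) [Group G] [TopologicalSpace G] : (nK n G).Normal :=
  ⟨fun x hx g => Subgroup.mem_sInf.mpr fun H hH =>
    hH.1.conj_mem x (Subgroup.mem_sInf.mp hx H hH) g⟩

lemma nK_le [Group G] [TopologicalSpace G] {n : ℕ} {H : Subgroup G} (hH : H ∈ nSet n G) :
    nK n G ≤ H := sInf_le hH

lemma nSet_mono [Group G] [TopologicalSpace G] {n m : ℕ} (h : n ≤ m) :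
    nSet n G ⊆ nSet m G := fun H hH => ⟨hH.1, hH.2.1, hH.2.2.1.trans h, hH.2.2.2⟩

lemma nK_antitone [Group G] [TopologicalSpace G] {n m : ℕ} (h : n ≤ m) :
    nK m G ≤ nK n G := sInf_le_sInf (nSet_mono h)

lemma nSet_finite [Group G] [TopologicalSpace G] (hG : SmallGroup G) (n : ℕ) :
    (nSet n G).Finite := by
  apply Set.Finite.subset
    (Set.Finite.biUnion (Finset.range (n + 1)).finite_toSet
      (fun m _ => hG m))
  intro H hH
  have hlt : H.index < n + 1 := by
    have := hH.2.2.1; omega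
  apply Set.mem_biUnion (Finset.mem_coe.mpr (Finset.mem_range.mpr hlt))
  exact ⟨hH.1, hH.2.1, rfl⟩

lemma nK_isOpen [Group G] [TopologicalSpace G] (hG : SmallGroup G) (n : ℕ) :
    IsOpen ((nK n G : Subgroup G) : Set G) := by
  rw [nK, Subgroup.coe_sInf]
  exact Set.Finite.isOpen_biInter (nSet_finite hG n) (fun H hH => hH.2.1)

/-- Transporting an `sInf` of subgroups along an isomorphism. -/
lemma map_sInf_of_comap {X Y : Type} [Group X] [Group Y] (e : X ≃* Y)
    (SX : Set (Subgroup X)) (SY : Set (Subgroup Y))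
    (h1 : ∀ H ∈ SY, H.comap e.toMonoidHom ∈ SX)
    (h2 : ∀ H ∈ SX, H.comap e.symm.toMonoidHom ∈ SY) :
    (sInf SX).map e.toMonoidHom = sInf SY := by
  apply le_antisymm
  · rw [Subgroup.map_le_iff_le_comap]
    intro x hx
    rw [Subgroup.mem_comap, Subgroup.mem_sInf]
    intro H hH
    exact Subgroup.mem_sInf.mp hx _ (h1 H hH)
  · intro y hy
    refine ⟨e.symm y, ?_, by simp⟩
    simp only [SetLike.mem_coe]
    rw [Subgroup.mem_sInf]
    intro H hH
    exact Subgroup.mem_sInf.mp hy _ (h2 H hH)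

lemma comap_mem_nSet {X Y : Type} [Group X] [TopologicalSpace X] [Group Y] [TopologicalSpace Y]
    (e : X ≃* Y) (he : Continuous e) (n : ℕ) :
    ∀ H ∈ nSet n Y, H.comap e.toMonoidHom ∈ nSet n X := by
  intro H hH
  obtain ⟨h1, h2, h3, h4⟩ := hH
  have hidx : (H.comap e.toMonoidHom).index = H.index := by
    rw [Subgroup.index_comap,
      MonoidHom.range_eq_top_of_surjective _ e.surjective, Subgroup.relIndex_top_right]
  refine ⟨h1.comap _, ?_, ?_, ?_⟩
  · rw [Subgroup.coe_comap]
    exact h2.preimage he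
  · rw [hidx]; exact h3
  · rw [hidx]; exact h4

lemma nK_map {X Y : Type} [Group X] [TopologicalSpace X] [Group Y] [TopologicalSpace Y]
    (e : X ≃* Y) (he : Continuous e) (hes : Continuous e.symm) (n : ℕ) :
    (nK n X).map e.toMonoidHom = nK n Y :=
  map_sInf_of_comap e _ _ (comap_mem_nSet e he n) (comap_mem_nSet e.symm hes n)

/-- `nK n` of a product is the product of the `nK n`. -/
lemma nK_prod (n : ℕ) (G A : Type) [Group G] [TopologicalSpace G] [IsTopologicalGroup G]
    [CompactSpace G] [Group A] [TopologicalSpace A] [IsTopologicalGroup A] [CompactSpace A] :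
    nK n (G × A) = (nK n G).prod (nK n A) := by
  apply le_antisymm
  · intro x hx
    rw [Subgroup.mem_prod]
    constructor
    · rw [nK, Subgroup.mem_sInf]
      intro H hH
      have hmem : H.prod (⊤ : Subgroup A) ∈ nSet n (G × A) := by
        haveI := hH.1
        refine ⟨Subgroup.prod_normal H ⊤, ?_, ?_, ?_⟩
        · rw [Subgroup.coe_prod, Subgroup.coe_top]
          exact hH.2.1.prod isOpen_univ
        · rw [Subgroup.index_prod, Subgroup.index_top, mul_one]
          exact hH.2.2.1
        · rw [Subgroup.index_prod, Subgroup.index_top, mul_one]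
          exact hH.2.2.2
      have := Subgroup.mem_sInf.mp hx _ hmem
      exact (Subgroup.mem_prod.mp this).1
    · rw [nK, Subgroup.mem_sInf]
      intro H hH
      have hmem : (⊤ : Subgroup G).prod H ∈ nSet n (G × A) := by
        haveI := hH.1
        refine ⟨Subgroup.prod_normal ⊤ H, ?_, ?_, ?_⟩
        · rw [Subgroup.coe_prod, Subgroup.coe_top]
          exact isOpen_univ.prod hH.2.1
        · rw [Subgroup.index_prod, Subgroup.index_top, one_mul]
          exact hH.2.2.1
        · rw [Subgroup.index_prod, Subgroup.index_top, one_mul]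
          exact hH.2.2.2
      have := Subgroup.mem_sInf.mp hx _ hmem
      exact (Subgroup.mem_prod.mp this).2
  · intro x hx
    obtain ⟨hx1, hx2⟩ := Subgroup.mem_prod.mp hx
    rw [nK, Subgroup.mem_sInf]
    intro N hN
    haveI := hN.1
    have hN1 : N.comap (MonoidHom.inl G A) ∈ nSet n G := by
      have hdvd : (N.comap (MonoidHom.inl G A)).index ∣ N.index := by
        rw [Subgroup.index_comap]
        exact Subgroup.relIndex_dvd_index_of_normal N _
      refine ⟨hN.1.comap _, ?_, ?_, ?_⟩
      · rw [Subgroup.coe_comap]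
        exact hN.2.1.preimage (continuous_id.prodMk continuous_const)
      · exact le_trans (Nat.le_of_dvd (Nat.pos_of_ne_zero hN.2.2.2) hdvd) hN.2.2.1
      · intro hzero
        rw [hzero] at hdvd
        exact hN.2.2.2 (Nat.eq_zero_of_zero_dvd hdvd)
    have hN2 : N.comap (MonoidHom.inr G A) ∈ nSet n A := by
      have hdvd : (N.comap (MonoidHom.inr G A)).index ∣ N.index := by
        rw [Subgroup.index_comap]
        exact Subgroup.relIndex_dvd_index_of_normal N _
      refine ⟨hN.1.comap _, ?_, ?_, ?_⟩
      · rw [Subgroup.coe_comap]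
        exact hN.2.1.preimage (continuous_const.prodMk continuous_id)
      · exact le_trans (Nat.le_of_dvd (Nat.pos_of_ne_zero hN.2.2.2) hdvd) hN.2.2.1
      · intro hzero
        rw [hzero] at hdvd
        exact hN.2.2.2 (Nat.eq_zero_of_zero_dvd hdvd)
    have m1 : (x.1, (1 : A)) ∈ N := nK_le hN1 hx1
    have m2 : ((1 : G), x.2) ∈ N := nK_le hN2 hx2
    have := N.mul_mem m1 m2
    simpa using this

/-- The quotient of a product by a product of normal subgroups. -/
noncomputable def quotProd (G A : Type) [Group G] [Group A] (H : Subgroup G) (K : Subgroup A)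
    [H.Normal] [K.Normal] :
    ((G × A) ⧸ H.prod K) ≃* (G ⧸ H) × (A ⧸ K) :=
  (QuotientGroup.quotientMulEquivOfEq (by
      rw [MonoidHom.ker_prodMap, QuotientGroup.ker_mk', QuotientGroup.ker_mk'])).symm.trans
    (QuotientGroup.quotientKerEquivOfSurjective
      ((QuotientGroup.mk' H).prodMap (QuotientGroup.mk' K))
      ((QuotientGroup.mk'_surjective H).prodMap (QuotientGroup.mk'_surjective K)))

section Descent

/-- The set of normal subgroups of index at most `n` (abstract version). -/
def tSet (n : ℕ) (X : Type) [Group X] : Set (Subgroup X) :=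
  {H | H.Normal ∧ H.index ≤ n ∧ H.index ≠ 0}

lemma comap_mem_tSet {X Y : Type} [Group X] [Group Y] (e : X ≃* Y) (n : ℕ) :
    ∀ H ∈ tSet n Y, H.comap e.toMonoidHom ∈ tSet n X := by
  intro H hH
  have hidx : (H.comap e.toMonoidHom).index = H.index := by
    rw [Subgroup.index_comap,
      MonoidHom.range_eq_top_of_surjective _ e.surjective, Subgroup.relIndex_top_right]
  exact ⟨hH.1.comap _, hidx ▸ hH.2.1, hidx ▸ hH.2.2⟩

lemma tInf_map {X Y : Type} [Group X] [Group Y] (e : X ≃* Y) (n : ℕ) :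
    (sInf (tSet n X)).map e.toMonoidHom = sInf (tSet n Y) :=
  map_sInf_of_comap e _ _ (comap_mem_tSet e n) (comap_mem_tSet e.symm n)

variable {X : Type} [Group X] [TopologicalSpace X] [IsTopologicalGroup X] [CompactSpace X]

/-- The image of `nK n X` in `X ⧸ nK m X` is the intersection of all normal subgroups of
index at most `n` of the quotient. -/
lemma map_mk'_nK (hX : SmallGroup X) {n m : ℕ} (h : n ≤ m) :
    (nK n X).map (QuotientGroup.mk' (nK m X)) = sInf (tSet n (X ⧸ nK m X)) := by
  apply le_antisymm
  · rw [Subgroup.map_le_iff_le_comap]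
    intro x hx
    rw [Subgroup.mem_comap, Subgroup.mem_sInf]
    intro N hN
    have hker : nK m X ≤ N.comap (QuotientGroup.mk' (nK m X)) := by
      intro k hk
      rw [Subgroup.mem_comap, QuotientGroup.mk'_apply,
        (QuotientGroup.eq_one_iff k).mpr hk]
      exact N.one_mem
    have hcomap : N.comap (QuotientGroup.mk' (nK m X)) ∈ nSet n X := by
      have hidx : (N.comap (QuotientGroup.mk' (nK m X))).index = N.index := by
        rw [Subgroup.index_comap,
          MonoidHom.range_eq_top_of_surjective _ (QuotientGroup.mk'_surjective _),
          Subgroup.relIndex_top_right]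
      exact ⟨hN.1.comap _, Subgroup.isOpen_mono hker (nK_isOpen hX m),
        hidx ▸ hN.2.1, hidx ▸ hN.2.2⟩
    exact Subgroup.mem_sInf.mp hx _ hcomap
  · intro y hy
    obtain ⟨x, rfl⟩ := QuotientGroup.mk'_surjective (nK m X) y
    have hxmem : x ∈ nK n X := by
      rw [nK, Subgroup.mem_sInf]
      intro H hH
      have hker : nK m X ≤ H := le_trans (nK_antitone h) (nK_le hH)
      have hmap : H.map (QuotientGroup.mk' (nK m X)) ∈ tSet n (X ⧸ nK m X) := by
        have hidx : (H.map (QuotientGroup.mk' (nK m X))).index = H.index := by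
          rw [Subgroup.index_map,
            MonoidHom.range_eq_top_of_surjective _ (QuotientGroup.mk'_surjective _),
            Subgroup.index_top, mul_one, QuotientGroup.ker_mk', sup_of_le_left hker]
        exact ⟨hH.1.map _ (QuotientGroup.mk'_surjective _), hidx ▸ hH.2.2.1,
          hidx ▸ hH.2.2.2⟩
      have := Subgroup.mem_sInf.mp hy _ hmap
      have hx' : x ∈ (H.map (QuotientGroup.mk' (nK m X))).comap (QuotientGroup.mk' (nK m X)) :=
        Subgroup.mem_comap.mpr this
      rwa [Subgroup.comap_map_eq, QuotientGroup.ker_mk', sup_of_le_left hker] at hx'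
    exact ⟨x, hxmem, rfl⟩

/-- Natural projection between the quotients. -/
def pMap (X : Type) [Group X] [TopologicalSpace X] {n m : ℕ} (h : n ≤ m) :
    (X ⧸ nK m X) →* X ⧸ nK n X :=
  QuotientGroup.map _ _ (MonoidHom.id X) (fun x hx => nK_antitone h hx)

@[simp] lemma pMap_mk (X : Type) [Group X] [TopologicalSpace X] {n m : ℕ} (h : n ≤ m) (x : X) :
    pMap X h ((x : X ⧸ nK m X)) = (x : X ⧸ nK n X) :=
  QuotientGroup.map_mk _ _ _ _ x

lemma mem_map_mk'_iff {X : Type} [Group X] (N H : Subgroup X) [N.Normal] (hle : N ≤ H) (x : X) :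
    (x : X ⧸ N) ∈ H.map (QuotientGroup.mk' N) ↔ x ∈ H := by
  constructor
  · intro hx
    have h2 : x ∈ (H.map (QuotientGroup.mk' N)).comap (QuotientGroup.mk' N) :=
      Subgroup.mem_comap.mpr hx
    rwa [Subgroup.comap_map_eq, QuotientGroup.ker_mk', sup_of_le_left hle] at h2
  · intro hx; exact ⟨x, hx, rfl⟩

lemma ker_pMap (X : Type) [Group X] [TopologicalSpace X] {n m : ℕ} (h : n ≤ m) :
    (pMap X h).ker = (nK n X).map (QuotientGroup.mk' (nK m X)) := by
  ext z
  induction z using QuotientGroup.induction_on with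
  | H x =>
    rw [MonoidHom.mem_ker, pMap_mk, QuotientGroup.eq_one_iff,
      mem_map_mk'_iff _ _ (nK_antitone h) x]

end Descent

section DIso

variable {X Y : Type} [Group X] [TopologicalSpace X] [IsTopologicalGroup X] [CompactSpace X]
  [Group Y] [TopologicalSpace Y] [IsTopologicalGroup Y] [CompactSpace Y]

lemma dHom_cond (hX : SmallGroup X) (hY : SmallGroup Y) {n m : ℕ} (h : n ≤ m)
    (f : (X ⧸ nK m X) ≃* (Y ⧸ nK m Y)) :
    ∀ x ∈ nK n X,
      ((pMap Y h).comp (f.toMonoidHom.comp (QuotientGroup.mk' (nK m X)))) x = 1 := by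
  intro x hx
  have h1 : ((x : X ⧸ nK m X)) ∈ (nK n X).map (QuotientGroup.mk' (nK m X)) := ⟨x, hx, rfl⟩
  rw [map_mk'_nK hX h] at h1
  have h2 : f ((x : X ⧸ nK m X)) ∈ (sInf (tSet n (X ⧸ nK m X))).map f.toMonoidHom :=
    ⟨_, h1, rfl⟩
  rw [tInf_map f n, ← map_mk'_nK hY h] at h2
  obtain ⟨y, hy, hfy⟩ := h2
  simp only [MonoidHom.comp_apply, MulEquiv.coe_toMonoidHom, QuotientGroup.mk'_apply]
  rw [← hfy, QuotientGroup.mk'_apply, pMap_mk, QuotientGroup.eq_one_iff]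
  exact hy

/-- The descended homomorphism. -/
noncomputable def dHom (hX : SmallGroup X) (hY : SmallGroup Y) {n m : ℕ} (h : n ≤ m)
    (f : (X ⧸ nK m X) ≃* (Y ⧸ nK m Y)) : (X ⧸ nK n X) →* (Y ⧸ nK n Y) :=
  QuotientGroup.lift (nK n X)
    ((pMap Y h).comp (f.toMonoidHom.comp (QuotientGroup.mk' (nK m X))))
    (dHom_cond hX hY h f)

@[simp] lemma dHom_mk (hX : SmallGroup X) (hY : SmallGroup Y) {n m : ℕ} (h : n ≤ m)
    (f : (X ⧸ nK m X) ≃* (Y ⧸ nK m Y)) (x : X) :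
    dHom hX hY h f ((x : X ⧸ nK n X)) = pMap Y h (f ((x : X ⧸ nK m X))) := rfl

lemma dHom_bijective (hX : SmallGroup X) (hY : SmallGroup Y) {n m : ℕ} (h : n ≤ m)
    (f : (X ⧸ nK m X) ≃* (Y ⧸ nK m Y)) : Function.Bijective (dHom hX hY h f) := by
  constructor
  · rw [← MonoidHom.ker_eq_bot_iff, eq_bot_iff]
    intro z hz
    induction z using QuotientGroup.induction_on with
    | H x =>
      rw [MonoidHom.mem_ker, dHom_mk] at hz
      have h1 : f ((x : X ⧸ nK m X)) ∈ (pMap Y h).ker := hz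
      rw [ker_pMap Y h, map_mk'_nK hY h, ← tInf_map f n] at h1
      obtain ⟨s, hs, hfs⟩ := h1
      simp only [SetLike.mem_coe] at hs
      have hsx : s = ((x : X ⧸ nK m X)) := f.injective hfs
      rw [hsx, ← map_mk'_nK hX h, mem_map_mk'_iff _ _ (nK_antitone h) x] at hs
      simpa using (QuotientGroup.eq_one_iff x).mpr hs
  · intro z
    induction z using QuotientGroup.induction_on with
    | H y =>
      obtain ⟨x, hx⟩ := QuotientGroup.mk'_surjective (nK m X) (f.symm ((y : Y ⧸ nK m Y)))
      refine ⟨((x : X ⧸ nK n X)), ?_⟩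
      rw [dHom_mk]
      have : f ((x : X ⧸ nK m X)) = ((y : Y ⧸ nK m Y)) := by
        rw [show ((x : X ⧸ nK m X)) = f.symm ((y : Y ⧸ nK m Y)) from hx]
        simp
      rw [this, pMap_mk]

/-- The descended isomorphism. -/
noncomputable def dIso (hX : SmallGroup X) (hY : SmallGroup Y) {n m : ℕ} (h : n ≤ m)
    (f : (X ⧸ nK m X) ≃* (Y ⧸ nK m Y)) : (X ⧸ nK n X) ≃* (Y ⧸ nK n Y) :=
  MulEquiv.ofBijective (dHom hX hY h f) (dHom_bijective hX hY h f)

@[simp] lemma dIso_mk (hX : SmallGroup X) (hY : SmallGroup Y) {n m : ℕ} (h : n ≤ m)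
    (f : (X ⧸ nK m X) ≃* (Y ⧸ nK m Y)) (x : X) :
    dIso hX hY h f ((x : X ⧸ nK n X)) = pMap Y h (f ((x : X ⧸ nK m X))) := rfl

lemma dIso_self (hX : SmallGroup X) (hY : SmallGroup Y) {n : ℕ}
    (f : (X ⧸ nK n X) ≃* (Y ⧸ nK n Y)) : dIso hX hY (le_refl n) f = f := by
  apply MulEquiv.ext
  intro z
  induction z using QuotientGroup.induction_on with
  | H x =>
    rw [dIso_mk]
    induction (f ((x : X ⧸ nK n X))) using QuotientGroup.induction_on with
    | H y => rw [pMap_mk]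

lemma dIso_trans (hX : SmallGroup X) (hY : SmallGroup Y) {n m k : ℕ} (h1 : n ≤ m) (h2 : m ≤ k)
    (f : (X ⧸ nK k X) ≃* (Y ⧸ nK k Y)) :
    dIso hX hY h1 (dIso hX hY h2 f) = dIso hX hY (h1.trans h2) f := by
  apply MulEquiv.ext
  intro z
  induction z using QuotientGroup.induction_on with
  | H x =>
    rw [dIso_mk, dIso_mk, dIso_mk]
    induction (f ((x : X ⧸ nK k X))) using QuotientGroup.induction_on with
    | H y => rw [pMap_mk, pMap_mk, pMap_mk]

end DIso

section Build

variable {A B : Type}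
  [Group A] [TopologicalSpace A] [IsTopologicalGroup A] [CompactSpace A] [T2Space A]
  [TotallyDisconnectedSpace A]
  [Group B] [TopologicalSpace B] [IsTopologicalGroup B] [CompactSpace B] [T2Space B]
  [TotallyDisconnectedSpace B]

lemma nK_isClosed (n : ℕ) : IsClosed ((nK n A : Subgroup A) : Set A) := by
  rw [nK, Subgroup.coe_sInf]
  exact isClosed_biInter (fun H hH => Subgroup.isClosed_of_isOpen _ hH.2.1)

lemma exists_nK_le_nhds {U : Set A} (hU : U ∈ nhds (1 : A)) :
    ∃ n : ℕ, ((nK n A : Subgroup A) : Set A) ⊆ U := by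
  obtain ⟨V, hVU, hVopen, hV1⟩ := mem_nhds_iff.mp hU
  obtain ⟨W, hWclopen, hW1, hWV⟩ := compact_exists_isClopen_in_isOpen hVopen hV1
  obtain ⟨H, hHW⟩ :=
    IsTopologicalGroup.exist_openNormalSubgroup_sub_clopen_nhds_of_one hWclopen hW1
  haveI : Finite (A ⧸ H.toSubgroup) :=
    Subgroup.quotient_finite_of_isOpen H.toSubgroup H.isOpen'
  have hidx : H.toSubgroup.index ≠ 0 := by
    rw [Subgroup.index_eq_card]
    exact Nat.card_ne_zero.mpr ⟨inferInstance, inferInstance⟩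
  refine ⟨H.toSubgroup.index, ?_⟩
  have hle : nK H.toSubgroup.index A ≤ H.toSubgroup :=
    nK_le ⟨H.isNormal', H.isOpen', le_rfl, hidx⟩
  exact fun x hx => hVU (hWV (hHW (hle hx)))

lemma eq_one_of_mem_nK {x : A} (hx : ∀ n : ℕ, x ∈ nK n A) : x = 1 := by
  by_contra hne
  have hU : ({x}ᶜ : Set A) ∈ nhds (1 : A) :=
    IsOpen.mem_nhds isOpen_compl_singleton (by simpa using (Ne.symm hne))
  obtain ⟨n, hn⟩ := exists_nK_le_nhds hU
  exact hn (hx n) rfl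

lemma target_unique {b b' : B} (h : ∀ n : ℕ, ((b : B ⧸ nK n B)) = ((b' : B ⧸ nK n B))) :
    b = b' := by
  have : b⁻¹ * b' = 1 := eq_one_of_mem_nK (fun n => QuotientGroup.eq.mp (h n))
  rw [inv_mul_eq_one] at this
  exact this

lemma exists_target (w : ∀ n : ℕ, A ⧸ nK n A → B ⧸ nK n B)
    (hw : ∀ {n m : ℕ} (h : n ≤ m) (a : A),
      w n ((a : A ⧸ nK n A)) = pMap B h (w m ((a : A ⧸ nK m A)))) (a : A) :
    ∃ b : B, ∀ n : ℕ, ((b : B ⧸ nK n B)) = w n ((a : A ⧸ nK n A)) := by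
  have hrep : ∀ n : ℕ, ∃ b : B, ((b : B ⧸ nK n B)) = w n ((a : A ⧸ nK n A)) := by
    intro n
    obtain ⟨b, hb⟩ := QuotientGroup.mk'_surjective (nK n B) (w n ((a : A ⧸ nK n A)))
    exact ⟨b, hb⟩
  choose r hr using hrep
  set C : ℕ → Set B := fun n => {b : B | ((b : B ⧸ nK n B)) = w n ((a : A ⧸ nK n A))} with hC
  have hCclosed : ∀ n, IsClosed (C n) := by
    intro n
    have : C n = (fun b : B => b⁻¹ * r n) ⁻¹' ((nK n B : Subgroup B) : Set B) := by
      ext b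
      simp only [hC, Set.mem_setOf_eq, Set.mem_preimage, SetLike.mem_coe]
      rw [← QuotientGroup.eq, ← hr n]
    rw [this]
    exact (nK_isClosed n).preimage (by continuity)
  have hCne : ∀ n, (C n).Nonempty := fun n => ⟨r n, hr n⟩
  have hCdec : ∀ n, C (n + 1) ⊆ C n := by
    intro n b hb
    have h1 : w n ((a : A ⧸ nK n A)) =
        pMap B (Nat.le_succ n) (w (n + 1) ((a : A ⧸ nK (n+1) A))) := hw (Nat.le_succ n) a
    simp only [hC, Set.mem_setOf_eq] at hb ⊢
    rw [h1, ← hb, pMap_mk]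
  obtain ⟨b, hb⟩ := IsCompact.nonempty_iInter_of_sequence_nonempty_isCompact_isClosed C hCdec
    hCne ((hCclosed 0).isCompact) hCclosed
  exact ⟨b, fun n => Set.mem_iInter.mp hb n⟩

lemma continuous_of_compat (hA : SmallGroup A) {φ : A → B}
    (hcomp : ∀ (a x : A) (n : ℕ), a⁻¹ * x ∈ nK n A → (φ a)⁻¹ * φ x ∈ nK n B) :
    Continuous φ := by
  rw [continuous_def]
  intro U hUopen
  rw [isOpen_iff_forall_mem_open]
  intro a ha
  have hU1 : (fun b : B => φ a * b) ⁻¹' U ∈ nhds (1 : B) := by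
    apply IsOpen.mem_nhds (hUopen.preimage (continuous_mul_left _))
    simp only [Set.mem_preimage, mul_one]
    exact ha
  obtain ⟨n, hn⟩ := exists_nK_le_nhds hU1
  refine ⟨(fun x : A => a⁻¹ * x) ⁻¹' ((nK n A : Subgroup A) : Set A), ?_, ?_, ?_⟩
  · intro x hx
    have := hn (hcomp a x n hx)
    simpa using this
  · exact (nK_isOpen hA n).preimage (continuous_mul_left _)
  · simp only [Set.mem_preimage, inv_mul_cancel, SetLike.mem_coe]
    exact (nK n A).one_mem

lemma build_iso (hA : SmallGroup A) (hB : SmallGroup B)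
    (u : ∀ n : ℕ, (A ⧸ nK n A) ≃* (B ⧸ nK n B))
    (hu : ∀ {n m : ℕ} (h : n ≤ m), dIso hA hB h (u m) = u n) :
    ∃ e : A ≃* B, Continuous e ∧ Continuous e.symm := by
  have hu' : ∀ {n m : ℕ} (h : n ≤ m) (a : A),
      u n ((a : A ⧸ nK n A)) = pMap B h (u m ((a : A ⧸ nK m A))) := by
    intro n m h a
    rw [← hu h, dIso_mk]
  have hv' : ∀ {n m : ℕ} (h : n ≤ m) (b : B),
      (u n).symm ((b : B ⧸ nK n B)) = pMap A h ((u m).symm ((b : B ⧸ nK m B))) := by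
    intro n m h b
    obtain ⟨x, hx⟩ := QuotientGroup.mk'_surjective (nK m A) ((u m).symm ((b : B ⧸ nK m B)))
    rw [QuotientGroup.mk'_apply] at hx
    rw [← hx, pMap_mk]
    apply (u n).injective
    rw [MulEquiv.apply_symm_apply, hu' h x]
    have : u m ((x : A ⧸ nK m A)) = ((b : B ⧸ nK m B)) := by
      rw [show ((x : A ⧸ nK m A)) = (u m).symm ((b : B ⧸ nK m B)) from hx,
        MulEquiv.apply_symm_apply]
    rw [this, pMap_mk]
  have hφex := fun a => exists_target (fun n => u n) (fun {n m} h a => hu' h a) a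
  have hψex := fun b => exists_target (fun n => (u n).symm) (fun {n m} h b => hv' h b) b
  set φ : A → B := fun a => Classical.choose (hφex a) with hφdef
  have hφ : ∀ (a : A) (n : ℕ), ((φ a : B ⧸ nK n B)) = u n ((a : A ⧸ nK n A)) :=
    fun a => Classical.choose_spec (hφex a)
  set ψ : B → A := fun b => Classical.choose (hψex b) with hψdef
  have hψ : ∀ (b : B) (n : ℕ), ((ψ b : A ⧸ nK n A)) = (u n).symm ((b : B ⧸ nK n B)) :=
    fun b => Classical.choose_spec (hψex b)
  have hleft : ∀ a : A, ψ (φ a) = a := by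
    intro a
    have h1 : ∀ n : ℕ, ((ψ (φ a) : A ⧸ nK n A)) = ((a : A ⧸ nK n A)) := by
      intro n
      rw [hψ (φ a) n, hφ a n, MulEquiv.symm_apply_apply]
    exact target_unique h1
  have hright : ∀ b : B, φ (ψ b) = b := by
    intro b
    have h1 : ∀ n : ℕ, ((φ (ψ b) : B ⧸ nK n B)) = ((b : B ⧸ nK n B)) := by
      intro n
      rw [hφ (ψ b) n, hψ b n, MulEquiv.apply_symm_apply]
    exact target_unique h1
  have hmul : ∀ a a' : A, φ (a * a') = φ a * φ a' := by
    intro a a'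
    apply target_unique (b := φ (a * a')) (b' := φ a * φ a')
    intro n
    have : ((φ a * φ a' : B) : B ⧸ nK n B)
        = ((φ a : B ⧸ nK n B)) * ((φ a' : B ⧸ nK n B)) := rfl
    rw [hφ (a * a') n, this, hφ a n, hφ a' n, ← map_mul]
    rfl
  have hcompφ : ∀ (a x : A) (n : ℕ), a⁻¹ * x ∈ nK n A → (φ a)⁻¹ * φ x ∈ nK n B := by
    intro a x n hax
    rw [← QuotientGroup.eq, hφ a n, hφ x n]
    rw [QuotientGroup.eq.mpr hax]
  have hcompψ : ∀ (b y : B) (n : ℕ), b⁻¹ * y ∈ nK n B → (ψ b)⁻¹ * ψ y ∈ nK n A := by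
    intro b y n hby
    rw [← QuotientGroup.eq, hψ b n, hψ y n]
    rw [QuotientGroup.eq.mpr hby]
  refine ⟨MulEquiv.mk' ⟨φ, ψ, hleft, hright⟩ hmul, ?_, ?_⟩
  · exact continuous_of_compat hA hcompφ
  · exact continuous_of_compat hB hcompψ

end Build

section Main

open CategoryTheory Opposite

theorem smallProfinite_cancellation' (G A B : Type)
    [Group G] [TopologicalSpace G] [IsTopologicalGroup G] [CompactSpace G] [T2Space G]
    [TotallyDisconnectedSpace G]
    [Group A] [TopologicalSpace A] [IsTopologicalGroup A] [CompactSpace A] [T2Space A]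
    [TotallyDisconnectedSpace A]
    [Group B] [TopologicalSpace B] [IsTopologicalGroup B] [CompactSpace B] [T2Space B]
    [TotallyDisconnectedSpace B]
    (hG : SmallGroup G) (hA : SmallGroup A) (hB : SmallGroup B)
    (h : ∃ e : (G × A) ≃* (G × B), Continuous e ∧ Continuous e.symm) :
    ∃ e : A ≃* B, Continuous e ∧ Continuous e.symm := by
  obtain ⟨e, he, hes⟩ := h
  have level : ∀ n : ℕ, Nonempty ((A ⧸ nK n A) ≃* (B ⧸ nK n B)) := by
    intro n
    haveI : Finite (G ⧸ nK n G) := Subgroup.quotient_finite_of_isOpen _ (nK_isOpen hG n)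
    haveI : Finite (A ⧸ nK n A) := Subgroup.quotient_finite_of_isOpen _ (nK_isOpen hA n)
    haveI : Finite (B ⧸ nK n B) := Subgroup.quotient_finite_of_isOpen _ (nK_isOpen hB n)
    have hmap : ((nK n G).prod (nK n A)).map e.toMonoidHom = (nK n G).prod (nK n B) := by
      rw [← nK_prod n G A, ← nK_prod n G B]
      exact nK_map e he hes n
    haveI : ((nK n G).prod (nK n A)).Normal := Subgroup.prod_normal _ _
    haveI : ((nK n G).prod (nK n B)).Normal := Subgroup.prod_normal _ _
    have Ψ : ((G × A) ⧸ (nK n G).prod (nK n A)) ≃* ((G × B) ⧸ (nK n G).prod (nK n B)) :=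
      QuotientGroup.congr _ _ e hmap
    have Φ := ((quotProd G A (nK n G) (nK n A)).symm.trans Ψ).trans
      (quotProd G B (nK n G) (nK n B))
    exact finite_cancel Φ
  let F : ℕᵒᵖ ⥤ Type :=
    { obj := fun n => (A ⧸ nK (unop n) A) ≃* (B ⧸ nK (unop n) B)
      map := fun {m n} h => ↾(fun f => dIso hA hB (leOfHom h.unop) f)
      map_id := fun n => by ext f x; exact DFunLike.congr_fun (dIso_self hA hB f) x
      map_comp := fun {n m k} h1 h2 => by
        ext f x
        exact DFunLike.congr_fun
          (dIso_trans hA hB (leOfHom h2.unop) (leOfHom h1.unop) f).symm x }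
  haveI : ∀ n : ℕᵒᵖ, Finite (F.obj n) := fun n =>
    haveI : Finite (A ⧸ nK (unop n) A) :=
      Subgroup.quotient_finite_of_isOpen _ (nK_isOpen hA (unop n))
    haveI : Finite (B ⧸ nK (unop n) B) :=
      Subgroup.quotient_finite_of_isOpen _ (nK_isOpen hB (unop n))
    Finite.of_injective (fun e => (e : (A ⧸ nK (unop n) A) → (B ⧸ nK (unop n) B)))
      DFunLike.coe_injective
  haveI : ∀ n : ℕᵒᵖ, Nonempty (F.obj n) := fun n => level (unop n)
  obtain ⟨u, hu⟩ := nonempty_sections_of_finite_inverse_system F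
  have hcompat : ∀ {n m : ℕ} (h : n ≤ m), dIso hA hB h (u (op m)) = u (op n) := by
    intro n m h
    exact hu ((homOfLE h).op : op m ⟶ op n)
  exact build_iso hA hB (fun n => u (op n)) hcompat

end Main

end Profinite

end Aux

/-- Small profinite groups can be cancelled in direct products of
small profinite groups. -/
theorem smallProfinite_cancellation (G A B : Type)
    [Group G] [TopologicalSpace G] [IsTopologicalGroup G] [CompactSpace G] [T2Space G]
    [TotallyDisconnectedSpace G]
    [Group A] [TopologicalSpace A] [IsTopologicalGroup A] [CompactSpace A] [T2Space A]
    [TotallyDisconnectedSpace A]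
    [Group B] [TopologicalSpace B] [IsTopologicalGroup B] [CompactSpace B] [T2Space B]
    [TotallyDisconnectedSpace B]
    (hG : SmallGroup G) (hA : SmallGroup A) (hB : SmallGroup B)
    (h : IsTopIso (G × A) (G × B)) :
    IsTopIso A B := by
  exact smallProfinite_cancellation' G A B hG hA hB h
end

section
/- There exists an abelian profinite group G such that G is not topologically isomorphic to any direct product ∏_{i∈I} G_i of indecomposable profinite groups (over any index set I). -/
noncomputable section
open Multiplicative

namespace AuxNoDecomp

/-! ### Discrete topology on ZMod -/

instance (n : ℕ) : TopologicalSpace (ZMod n) := ⊥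
instance (n : ℕ) : DiscreteTopology (ZMod n) := ⟨rfl⟩
instance (n : ℕ) : IsTopologicalAddGroup (ZMod n) :=
  { continuous_add := continuous_of_discreteTopology
    continuous_neg := continuous_of_discreteTopology }

instance (n : ℕ) : NeZero ((2:ℕ) ^ n) := ⟨pow_ne_zero n (by norm_num)⟩

/-! ### Multiplicative transfer instances -/

instance {X : Type*} [TopologicalSpace X] [CompactSpace X] :
    CompactSpace (Multiplicative X) := ‹CompactSpace X›
instance {X : Type*} [TopologicalSpace X] [T2Space X] :
    T2Space (Multiplicative X) := ‹T2Space X›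
instance {X : Type*} [TopologicalSpace X] [TotallyDisconnectedSpace X] :
    TotallyDisconnectedSpace (Multiplicative X) := ‹TotallyDisconnectedSpace X›
instance {X : Type*} [TopologicalSpace X] [DiscreteTopology X] :
    DiscreteTopology (Multiplicative X) := ‹DiscreteTopology X›

/-! ### ZMod lemmas -/

theorem zmod_nsmul_eq_zero_iff {n : ℕ} [NeZero n] (m : ℕ) (x : ZMod n) :
    m • x = 0 ↔ n ∣ m * x.val := by
  have h : m • x = ((m * x.val : ℕ) : ZMod n) := by
    conv_lhs => rw [← ZMod.natCast_zmod_val x]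
    rw [nsmul_eq_mul, ← Nat.cast_mul]
  rw [h, ZMod.natCast_eq_zero_iff]

theorem zmod2_cases (x : ZMod 2) : x = 0 ∨ x = 1 := by revert x; decide

theorem socle_cases {j : ℕ} {x : ZMod (2 ^ (j+2))} (h : 2 • x = 0) :
    x = 0 ∨ x = ((2^(j+1) : ℕ) : ZMod (2 ^ (j+2))) := by
  have hd : (2:ℕ)^(j+2) ∣ 2 * x.val := (zmod_nsmul_eq_zero_iff 2 x).mp h
  have hlt : x.val < 2^(j+2) := ZMod.val_lt x
  have hv : x.val = 0 ∨ x.val = 2^(j+1) := by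
    obtain ⟨t, ht⟩ := hd
    have h2 : (2:ℕ)^(j+2) = 2 * 2^(j+1) := by ring
    have hx : x.val = 2^(j+1) * t := by
      have hh : 2 * x.val = 2 * (2^(j+1) * t) := by rw [ht, h2]; ring
      omega
    have hlt2 : 2^(j+1) * t < 2^(j+1) * 2 := by
      have : x.val < 2 * 2^(j+1) := by omega
      omega
    have ht2 : t < 2 := Nat.lt_of_mul_lt_mul_left hlt2
    interval_cases t
    · omega
    · omega
  rcases hv with h0 | h1
  · left
    rw [← ZMod.natCast_zmod_val x, h0, Nat.cast_zero]
  · right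
    rw [← ZMod.natCast_zmod_val x, h1]


/-! ### The group `SG` -/

/-- parity homomorphism -/
def parh (j : ℕ) : ZMod (2 ^ (j+2)) →+* ZMod 2 :=
  ZMod.castHom (dvd_pow_self 2 (by omega)) (ZMod 2)

theorem parh_eq_zero_iff {j : ℕ} (x : ZMod (2 ^ (j+2))) :
    parh j x = 0 ↔ 2 ∣ x.val := by
  have h : parh j x = (x.val : ZMod 2) := by
    rw [parh, ZMod.castHom_apply, ZMod.natCast_val]
  rw [h, ZMod.natCast_eq_zero_iff]

theorem parh_eq_one_iff {j : ℕ} (x : ZMod (2 ^ (j+2))) :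
    parh j x = 1 ↔ ¬ 2 ∣ x.val := by
  constructor
  · intro h1 hdvd
    rw [← parh_eq_zero_iff] at hdvd
    rw [h1] at hdvd
    exact one_ne_zero hdvd
  · intro hnd
    rcases zmod2_cases (parh j x) with h0 | h1
    · exact absurd ((parh_eq_zero_iff x).mp h0) hnd
    · exact h1

abbrev Amb : Type := ∀ j : ℕ, ZMod (2 ^ (j+2))

/-- The main group: sequences with constant parity. -/
def SG : AddSubgroup Amb where
  carrier := {c | ∀ j, parh j (c j) = parh 0 (c 0)}
  zero_mem' := by intro j; simp
  add_mem' := by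
    intro a b ha hb j
    simp only [Pi.add_apply, map_add, ha j, hb j]
  neg_mem' := by
    intro a ha j
    simp only [Pi.neg_apply, map_neg, ha j]

theorem mem_SG_iff {c : Amb} : c ∈ SG ↔ ∀ j, parh j (c j) = parh 0 (c 0) := Iff.rfl

theorem SG_closed : IsClosed (SG : Set Amb) := by
  have h : (SG : Set Amb) = ⋂ j, {c : Amb | parh j (c j) - parh 0 (c 0) = 0} := by
    ext c
    simp only [Set.mem_iInter, Set.mem_setOf_eq, sub_eq_zero, SetLike.mem_coe, mem_SG_iff]
  rw [h]
  refine isClosed_iInter fun j => ?_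
  have hc : Continuous fun c : Amb => parh j (c j) - parh 0 (c 0) := by
    have h1 : Continuous fun c : Amb => parh j (c j) :=
      continuous_of_discreteTopology.comp (continuous_apply j)
    have h2 : Continuous fun c : Amb => parh 0 (c 0) :=
      continuous_of_discreteTopology.comp (continuous_apply 0)
    exact h1.sub h2
  exact (isClosed_singleton (x := (0 : ZMod 2))).preimage hc

abbrev SGsub : Type := ↥SG

instance : CompactSpace SGsub := isCompact_iff_compactSpace.mp (SG_closed.isCompact)

abbrev GG : Type := Multiplicative SGsub

/-! ### coordinate lemmas -/

theorem coe_nsmul (n : ℕ) (c : SGsub) : ((n • c : SGsub) : Amb) = n • (c : Amb) :=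
  map_nsmul SG.subtype n c

theorem coord_nsmul (n : ℕ) (c : SGsub) (j : ℕ) :
    ((n • c : SGsub) : Amb) j = n • ((c : Amb) j) := by
  rw [coe_nsmul]; rfl

/-! ### torsion lemmas -/

theorem two_pow_smul_eq_zero {c : SGsub} {n : ℕ} (hn : 0 < n) (h : n • c = 0) :
    (2 ^ n) • c = 0 := by
  apply Subtype.ext
  apply funext
  intro j
  have hj : n • ((c : Amb) j) = 0 := by
    have := congrFun (congrArg Subtype.val h) j
    rwa [coord_nsmul] at this
  rw [zmod_nsmul_eq_zero_iff] at hj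
  show (2^n) • ((c : Amb) j) = 0
  rw [zmod_nsmul_eq_zero_iff]
  set t := n.factorization 2 with htdef
  have hproj : (2:ℕ)^t ∣ n := by
    rw [htdef]; exact Nat.ordProj_dvd n 2
  obtain ⟨m, hm⟩ := hproj
  have hmodd : ¬ (2 ∣ m) := by
    intro ⟨m', hm'⟩
    have : (2:ℕ)^(t+1) ∣ n := ⟨m', by rw [hm, hm']; ring⟩
    have := (Nat.Prime.pow_dvd_iff_le_factorization Nat.prime_two hn.ne').mp this
    omega
  have hcop : Nat.Coprime (2^(j+2)) m :=
    Nat.Coprime.pow_left _ ((Nat.prime_two.coprime_iff_not_dvd).mpr hmodd)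
  have hj2 : (2:ℕ)^(j+2) ∣ (2^t * ((c:Amb) j).val) * m := by
    have : n * ((c:Amb) j).val = (2^t * ((c:Amb) j).val) * m := by rw [hm]; ring
    rwa [this] at hj
  have hdvd1 : (2:ℕ)^(j+2) ∣ 2^t * ((c:Amb) j).val :=
    Nat.Coprime.dvd_of_dvd_mul_right hcop hj2
  have htn : t ≤ n := by
    have h1 : (2:ℕ)^t ≤ n := Nat.le_of_dvd hn ⟨m, hm⟩
    have h2 : t < 2^t := Nat.lt_two_pow_self
    omega
  exact hdvd1.trans (Nat.mul_dvd_mul_right (pow_dvd_pow 2 htn) _)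

theorem tors_coords_even {c : SGsub} {a : ℕ} (h : (2^a) • c = 0) (j : ℕ) :
    2 ∣ ((c : Amb) j).val := by
  have hmem : ∀ i, parh i ((c:Amb) i) = parh 0 ((c:Amb) 0) := c.2
  have key : parh 0 ((c : Amb) 0) = 0 := by
    by_contra hne
    have h1 : parh 0 ((c:Amb) 0) = 1 := (zmod2_cases _).resolve_left hne
    have hodd : ¬ 2 ∣ ((c:Amb) a).val := by
      rw [← parh_eq_one_iff]
      rw [hmem a]; exact h1
    have ha : (2^a) • ((c:Amb) a) = 0 := by
      have := congrFun (congrArg Subtype.val h) a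
      rwa [coord_nsmul] at this
    rw [zmod_nsmul_eq_zero_iff] at ha
    -- 2^(a+2) ∣ 2^a * v  ⇒  4 ∣ v ⇒ 2 ∣ v
    obtain ⟨q, hq⟩ := ha
    have h4 : ((c:Amb) a).val = 4 * q := by
      have hh : 2^a * ((c:Amb) a).val = 2^a * (4 * q) := by
        rw [hq]; ring
      have hpos : 0 < (2:ℕ)^a := by positivity
      exact Nat.eq_of_mul_eq_mul_left hpos hh
    exact hodd ⟨2*q, by omega⟩
  rw [← parh_eq_zero_iff, hmem j]
  exact key


/-! ### preimage construction -/

theorem exists_preimage {σ : SGsub} (h2 : 2 • σ = 0) {h : ℕ}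
    (hvan : ∀ j, j ≤ h → (σ : Amb) j = 0) :
    ∃ c : SGsub, σ = 2^(h+1) • c := by
  classical
  set cf : Amb := fun j =>
    if (σ:Amb) j = 0 then 0 else ((2^(j - h) : ℕ) : ZMod (2^(j+2))) with hcf
  have hgt : ∀ j, (σ:Amb) j ≠ 0 → h < j := by
    intro j hne
    by_contra hle
    exact hne (hvan j (by omega))
  have hpar : ∀ j, parh j (cf j) = 0 := by
    intro j
    rw [hcf]
    by_cases hz : (σ:Amb) j = 0
    · simp [hz]
    · simp only [hz, if_false]
      rw [map_natCast (parh j)]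
      rw [ZMod.natCast_eq_zero_iff]
      exact dvd_pow_self 2 (by have := hgt j hz; omega)
  have hmem : cf ∈ SG := by
    rw [mem_SG_iff]
    intro j
    rw [hpar j, hpar 0]
  refine ⟨⟨cf, hmem⟩, ?_⟩
  apply Subtype.ext
  apply funext
  intro j
  rw [coord_nsmul]
  show (σ:Amb) j = 2^(h+1) • (cf j)
  by_cases hz : (σ:Amb) j = 0
  · rw [hcf]; simp [hz]
  · have hjh := hgt j hz
    have hsoc : 2 • ((σ:Amb) j) = 0 := by
      have := congrFun (congrArg Subtype.val h2) j
      rwa [coord_nsmul] at this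
    have hσj : (σ:Amb) j = ((2^(j+1) : ℕ) : ZMod (2^(j+2))) :=
      (socle_cases hsoc).resolve_left hz
    rw [hσj, hcf]
    simp only [hz, if_false]
    rw [nsmul_eq_mul, ← Nat.cast_mul]
    congr 1
    rw [← pow_add]
    congr 1
    omega

/-! ### explicit elements -/

def x0 : SGsub := ⟨(fun _ => 1), by
  rw [mem_SG_iff]; intro j
  rw [map_one, map_one]⟩

def tauA (m : ℕ) : Amb := fun j => if j < m then (2 : ZMod (2^(j+2))) else 0

theorem parh_two (j : ℕ) : parh j (2 : ZMod (2^(j+2))) = 0 := by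
  have : ((2:ℕ) : ZMod (2^(j+2))) = (2 : ZMod (2^(j+2))) := by push_cast; ring
  rw [← this, map_natCast (parh j), ZMod.natCast_eq_zero_iff]

def tau (m : ℕ) : SGsub := ⟨tauA m, by
  rw [mem_SG_iff]
  intro j
  have hz : ∀ i, parh i (tauA m i) = 0 := by
    intro i
    rw [tauA]
    by_cases hi : i < m
    · simp only [hi, if_true]; exact parh_two i
    · simp [hi]
  rw [hz j, hz 0]⟩

theorem val_two (j : ℕ) : (2 : ZMod (2^(j+2))).val = 2 := by
  have h : ((2:ℕ) : ZMod (2^(j+2))) = (2 : ZMod (2^(j+2))) := by push_cast; ring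
  rw [← h, ZMod.val_cast_of_lt]
  have : (2:ℕ)^1 < 2^(j+2) := Nat.pow_lt_pow_right (by omega) (by omega)
  omega

theorem tau_torsion (m : ℕ) : (2^(m+2)) • tau m = 0 := by
  apply Subtype.ext
  apply funext
  intro j
  rw [coord_nsmul]
  show (2^(m+2)) • (tauA m j) = 0
  rw [tauA]
  by_cases hj : j < m
  · simp only [hj, if_true]
    rw [zmod_nsmul_eq_zero_iff, val_two]
    have : (2:ℕ)^(m+2) * 2 = 2^(m+3) := by ring
    rw [this]
    exact pow_dvd_pow 2 (by omega)
  · simp [hj]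

/-! ### torsion sets and closures -/

def tset (H : Type*) [Monoid H] : Set H := {x | ∃ n : ℕ, 0 < n ∧ x ^ n = 1}

def torCl (H : Type*) [Monoid H] [TopologicalSpace H] : Set H := closure (tset H)

def atset : Set SGsub := {c | ∃ n : ℕ, 0 < n ∧ n • c = 0}

theorem x0_not_mem_closure : x0 ∉ closure atset := by
  have hsub : atset ⊆ {c : SGsub | parh 0 ((c : Amb) 0) = 0} := by
    rintro c ⟨n, hn, h0⟩
    have h2 := two_pow_smul_eq_zero hn h0
    have h3 := tors_coords_even h2 0
    exact (parh_eq_zero_iff _).mpr h3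
  have hcl : IsClosed {c : SGsub | parh 0 ((c:Amb) 0) = 0} := by
    have hc : Continuous fun c : SGsub => parh 0 ((c : Amb) 0) :=
      continuous_of_discreteTopology.comp ((continuous_apply 0).comp continuous_subtype_val)
    exact (isClosed_singleton (x := (0:ZMod 2))).preimage hc
  intro hx
  have hx0 : parh 0 ((x0 : Amb) 0) = 0 := closure_minimal hsub hcl hx
  have : parh 0 ((x0 : Amb) 0) = 1 := by
    show parh 0 (1 : ZMod (2^2)) = 1
    rw [map_one]
  rw [this] at hx0
  exact one_ne_zero hx0

theorem two_x0_mem_closure : ((2 : ℕ) • x0) ∈ closure atset := by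
  rw [mem_closure_iff]
  intro o ho hmem
  rw [isOpen_induced_iff] at ho
  obtain ⟨o', ho', rfl⟩ := ho
  obtain ⟨J, u, hu, hsub⟩ := isOpen_pi_iff.mp ho' _ hmem
  set m := (J.sup id) + 1 with hm
  have hcoord : ∀ j ∈ J, tauA m j = (((2:ℕ) • x0 : SGsub) : Amb) j := by
    intro j hj
    have hjm : j < m := by
      have : j ≤ J.sup id := Finset.le_sup (f := id) hj
      omega
    rw [coord_nsmul]
    show tauA m j = (2:ℕ) • (1 : ZMod (2^(j+2)))
    rw [tauA]
    simp only [hjm, if_true]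
    rw [nsmul_eq_mul, mul_one]
    push_cast
    ring
  refine ⟨tau m, ?_, ⟨2^(m+2), by positivity, tau_torsion m⟩⟩
  show (tau m : Amb) ∈ o'
  apply hsub
  intro j hj
  show tauA m j ∈ u j
  rw [hcoord j hj]
  exact (hu j hj).2


/-! ### bridge between `SGsub` and `GG` -/

def muh : SGsub ≃ₜ GG :=
  { toEquiv := Multiplicative.ofAdd (α := SGsub)
    continuous_toFun := continuous_ofAdd
    continuous_invFun := continuous_toAdd }

theorem image_atset : (muh '' atset) = tset GG := by
  ext z
  constructor
  · rintro ⟨c, ⟨n, hn, h0⟩, rfl⟩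
    refine ⟨n, hn, ?_⟩
    show (ofAdd c) ^ n = 1
    rw [← ofAdd_nsmul, h0]
    rfl
  · rintro ⟨n, hn, hz⟩
    refine ⟨z.toAdd, ⟨n, hn, ?_⟩, ofAdd_toAdd z⟩
    rw [← toAdd_pow, hz]
    rfl

theorem mem_torCl_GG_iff (c : SGsub) : (ofAdd c ∈ torCl GG) ↔ c ∈ closure atset := by
  rw [torCl, ← image_atset, ← Homeomorph.image_closure]
  constructor
  · rintro ⟨a, ha, hax⟩
    have : a = c := by
      have : ofAdd a = ofAdd c := hax
      exact ofAdd.injective this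
    rwa [← this]
  · intro hc
    exact ⟨c, hc, rfl⟩

/-! ### torsion closure of products -/

theorem torCl_pi {I : Type} (Fc : I → Type) [∀ i, Monoid (Fc i)]
    [∀ i, TopologicalSpace (Fc i)] :
    torCl (∀ i, Fc i) = Set.pi Set.univ (fun i => torCl (Fc i)) := by
  classical
  apply Set.Subset.antisymm
  · apply closure_minimal
    · rintro z ⟨n, hn, hz⟩ i _
      refine subset_closure ⟨n, hn, ?_⟩
      exact congrFun hz i
    · exact isClosed_set_pi (fun i _ => isClosed_closure)
  · intro z hz
    rw [torCl, mem_closure_iff]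
    intro o ho hmem
    obtain ⟨J, u, hu, hsub⟩ := isOpen_pi_iff.mp ho z hmem
    have hch : ∀ i ∈ J, ∃ t : Fc i, t ∈ u i ∧ ∃ n : ℕ, 0 < n ∧ t ^ n = 1 := by
      intro i hi
      have hzi : z i ∈ closure (tset (Fc i)) := hz i (Set.mem_univ i)
      rw [mem_closure_iff] at hzi
      obtain ⟨t, hto, htt⟩ := hzi (u i) (hu i hi).1 (hu i hi).2
      exact ⟨t, hto, htt⟩
    choose tt htu htn using hch
    choose nn hnp hne using htn
    set z' : ∀ i, Fc i := fun i => if hi : i ∈ J then tt i hi else 1 with hz'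
    set N : ℕ := ∏ p ∈ J.attach, nn p.1 p.2 with hN
    refine ⟨z', hsub ?_, ⟨N, ?_, ?_⟩⟩
    · intro i hi
      have hi' : i ∈ J := hi
      have hzz : z' i = tt i hi' := by rw [hz']; simp only [hi', dif_pos]
      rw [hzz]
      exact htu i hi'
    · rw [hN]
      exact Finset.prod_pos fun p _ => hnp p.1 p.2
    · funext i
      show z' i ^ N = 1
      by_cases hi : i ∈ J
      · obtain ⟨d, hd⟩ : nn i hi ∣ N := Finset.dvd_prod_of_mem _ (Finset.mem_attach J ⟨i, hi⟩)
        have hzi : z' i = tt i hi := by rw [hz']; simp only [hi, dif_pos]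
        rw [hzi, hd, pow_mul, hne i hi, one_pow]
      · have hzi : z' i = 1 := by rw [hz']; simp only [hi, dif_neg, not_false_iff]
        rw [hzi, one_pow]


/-! ### The detector homomorphism -/

def castdown (h : ℕ) : ZMod (2^(h+1+2)) →+* ZMod (2^(h+2)) :=
  ZMod.castHom (show (2:ℕ)^(h+2) ∣ 2^(h+1+2) from pow_dvd_pow 2 (by omega)) (ZMod (2^(h+2)))

def Df (h : ℕ) (c : SGsub) : ZMod (2^(h+2)) :=
  (c : Amb) h - castdown h ((c : Amb) (h+1))

theorem Df_add (h : ℕ) (a b : SGsub) : Df h (a+b) = Df h a + Df h b := by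
  have hco : ((a + b : SGsub) : Amb) = (a : Amb) + (b : Amb) := rfl
  simp only [Df, hco, Pi.add_apply, map_add]
  ring

theorem parh_apply (j : ℕ) (x : ZMod (2^(j+2))) : parh j x = ((x.val : ℕ) : ZMod 2) := by
  rw [parh, ZMod.castHom_apply, ZMod.natCast_val]

theorem natCast_two_mod (M a : ℕ) (hM : 2 ∣ M) : ((a % M : ℕ) : ZMod 2) = ((a : ℕ) : ZMod 2) := by
  conv_rhs => rw [← Nat.div_add_mod a M]
  push_cast
  have hM0 : ((M:ℕ) : ZMod 2) = 0 := (ZMod.natCast_eq_zero_iff _ _).mpr hM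
  rw [hM0]
  ring

theorem castdown_eq (h : ℕ) (x : ZMod (2^(h+1+2))) :
    castdown h x = ((x.val : ℕ) : ZMod (2^(h+2))) := by
  rw [castdown, ZMod.castHom_apply, ZMod.natCast_val]

theorem parh_castdown (h : ℕ) (x : ZMod (2^(h+1+2))) :
    parh h (castdown h x) = parh (h+1) x := by
  rw [parh_apply, parh_apply, castdown_eq, ZMod.val_natCast]
  exact natCast_two_mod _ _ ⟨2^(h+1), by ring⟩

theorem Df_even (h : ℕ) (c : SGsub) : 2 ∣ (Df h c).val := by
  rw [← parh_eq_zero_iff]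
  have hmem : ∀ i, parh i ((c:Amb) i) = parh 0 ((c:Amb) 0) := c.2
  rw [Df, map_sub, parh_castdown, hmem h, hmem (h+1)]
  ring

def gfun (h : ℕ) (c : SGsub) : ZMod (2^(h+1)) := (((Df h c).val / 2 : ℕ) : ZMod (2^(h+1)))

theorem gfun_add (h : ℕ) (a b : SGsub) : gfun h (a+b) = gfun h a + gfun h b := by
  obtain ⟨A', hA⟩ := Df_even h a
  obtain ⟨B', hB⟩ := Df_even h b
  have hval : (Df h (a+b)).val = (2*(A'+B')) % (2^(h+2)) := by
    rw [Df_add, ZMod.val_add, hA, hB]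
    congr 1
    ring
  have h2 : (2:ℕ)^(h+2) = 2 * 2^(h+1) := by ring
  have hval2 : (Df h (a+b)).val = 2 * ((A'+B') % 2^(h+1)) := by
    rw [hval, h2, Nat.mul_mod_mul_left]
  rw [gfun, hval2]
  have hdiv : 2 * ((A'+B') % 2^(h+1)) / 2 = (A'+B') % 2^(h+1) := by omega
  rw [hdiv, ZMod.natCast_mod, Nat.cast_add]
  rw [gfun, gfun, hA, hB]
  have hA' : 2 * A' / 2 = A' := by omega
  have hB' : 2 * B' / 2 = B' := by omega
  rw [hA', hB']

def gA (h : ℕ) : SGsub →+ ZMod (2^(h+1)) := AddMonoidHom.mk' (gfun h) (gfun_add h)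

theorem gfun_cont (h : ℕ) : Continuous (gfun h) := by
  have h1 : Continuous (fun c : SGsub => (((c:Amb) h), ((c:Amb) (h+1)))) :=
    Continuous.prodMk ((continuous_apply h).comp continuous_subtype_val)
      ((continuous_apply (h+1)).comp continuous_subtype_val)
  have h2 : Continuous (fun q : ZMod (2^(h+2)) × ZMod (2^(h+1+2)) =>
      (((q.1 - castdown h q.2).val / 2 : ℕ) : ZMod (2^(h+1)))) :=
    continuous_of_discreteTopology
  exact h2.comp h1

theorem quar_eq (h : ℕ) (x : ZMod (2^(h+2))) :
    ZMod.castHom (show (4:ℕ) ∣ 2^(h+2) from ⟨2^h, by ring⟩) (ZMod 4) x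
      = ((x.val : ℕ) : ZMod 4) := by
  rw [ZMod.castHom_apply, ZMod.natCast_val]

theorem Df_val_mod4 (h : ℕ) (sS : SGsub)
    (hv2 : 2 ∣ (((sS:Amb) h)).val) (hv4 : ¬ 4 ∣ (((sS:Amb) h)).val)
    (hw4 : 4 ∣ (((sS:Amb) (h+1))).val) :
    (Df h sS).val % 4 = 2 := by
  set quar := ZMod.castHom (show (4:ℕ) ∣ 2^(h+2) from ⟨2^h, by ring⟩) (ZMod 4) with hq
  have hstep : quar (Df h sS) = 2 := by
    rw [Df, map_sub]
    have h1 : quar ((sS:Amb) h) = 2 := by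
      rw [hq, quar_eq]
      have hmod : ((sS:Amb) h).val % 4 = 2 := by omega
      rw [← ZMod.natCast_mod, hmod]
      push_cast; ring
    have h2 : quar (castdown h ((sS:Amb) (h+1))) = 0 := by
      rw [castdown_eq, hq, quar_eq, ZMod.val_natCast]
      rw [ZMod.natCast_eq_zero_iff]
      rw [Nat.dvd_mod_iff ⟨2^h, by ring⟩]
      exact hw4
    rw [h1, h2]
    ring
  rw [quar_eq] at hstep
  have := congrArg ZMod.val hstep
  rw [ZMod.val_natCast] at this
  rw [this]
  rfl


theorem gA_apply (h : ℕ) (c : SGsub) : gA h c = gfun h c := rfl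

end AuxNoDecomp

set_option maxHeartbeats 1000000 in
open AuxNoDecomp Multiplicative in
/-- There is an abelian profinite group which is not topologically
isomorphic to any direct product of indecomposable profinite groups. -/
theorem exists_abelian_profinite_with_no_indecomposable_decomposition :
    ∃ G : ProfiniteGroup, (∀ a b : G.carrier, a * b = b * a) ∧
      ¬ ∃ (I : Type) (F : I → ProfiniteGroup),
          (∀ i, Indecomposable (F i).carrier) ∧
          IsTopIso G.carrier (∀ i, (F i).carrier) := by
  classical
  refine ⟨ProfiniteGroup.mk GG, fun a b => mul_comm a b, ?_⟩
  rintro ⟨I, F, hind, e0, he0, he0'⟩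
  obtain ⟨e, he, he'⟩ : IsTopIso GG (∀ i, (F i).carrier) := ⟨e0, he0, he0'⟩
  clear he0 he0'
  -- transfer of torsion sets along e
  have etors : Set.MapsTo ⇑e (tset GG) (tset (∀ i, (F i).carrier)) := by
    rintro z ⟨n, hn, hz⟩
    exact ⟨n, hn, by rw [← map_pow, hz, map_one]⟩
  have etors' : Set.MapsTo ⇑e.symm (tset (∀ i, (F i).carrier)) (tset GG) := by
    rintro z ⟨n, hn, hz⟩
    exact ⟨n, hn, by rw [← map_pow, hz, map_one]⟩
  -- the distinguished element
  have hxP : e (ofAdd x0) ∉ torCl (∀ i, (F i).carrier) := by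
    intro hmem
    have h1 : e.symm (e (ofAdd x0)) ∈ closure (tset GG) :=
      map_mem_closure he' hmem etors'
    rw [MulEquiv.symm_apply_apply] at h1
    exact x0_not_mem_closure ((mem_torCl_GG_iff x0).mp h1)
  have hxP2 : (e (ofAdd x0)) ^ 2 ∈ torCl (∀ i, (F i).carrier) := by
    have h1 : (ofAdd ((2:ℕ) • x0) : GG) ∈ torCl GG :=
      (mem_torCl_GG_iff _).mpr two_x0_mem_closure
    have h2 : e (ofAdd ((2:ℕ) • x0)) = (e (ofAdd x0)) ^ 2 := by
      rw [ofAdd_nsmul, map_pow]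
    rw [← h2]
    exact map_mem_closure he h1 etors
  rw [torCl_pi] at hxP hxP2
  -- pick the bad factor
  have hex_i : ∃ i, e (ofAdd x0) i ∉ torCl ((F i).carrier) := by
    by_contra hall
    push_neg at hall
    exact hxP (fun i _ => hall i)
  obtain ⟨i0, hyout⟩ := hex_i
  have hy2 : (e (ofAdd x0) i0) ^ 2 ∈ torCl ((F i0).carrier) := hxP2 i0 (Set.mem_univ i0)
  -- torsion exists in the factor
  have hWtors : ∃ t : (F i0).carrier, t ∈ tset ((F i0).carrier) ∧ t ≠ 1 := by
    by_contra hno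
    push_neg at hno
    have hsub : tset ((F i0).carrier) ⊆ {(1 : (F i0).carrier)} := fun t ht => hno t ht
    have hcl : torCl ((F i0).carrier) ⊆ {1} := closure_minimal hsub isClosed_singleton
    have hy1 : (e (ofAdd x0) i0) ^ 2 = 1 := hcl hy2
    exact hyout (subset_closure ⟨2, by norm_num, hy1⟩)
  obtain ⟨t, ⟨n, hn, htn⟩, ht1⟩ := hWtors
  -- the embedding and retraction
  set ψ : (F i0).carrier →* GG :=
    e.symm.toMonoidHom.comp (MonoidHom.mulSingle (fun i => (F i).carrier) i0) with hψdef
  set ρ : GG →* (F i0).carrier :=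
    (Pi.evalMonoidHom (fun i => (F i).carrier) i0).comp e.toMonoidHom with hρdef
  have hρψ : ∀ w, ρ (ψ w) = w := by
    intro w
    show (e (e.symm (Pi.mulSingle i0 w))) i0 = w
    rw [MulEquiv.apply_symm_apply]
    simp
  have hψcont : Continuous ⇑ψ := by
    show Continuous fun w => e.symm (Pi.mulSingle i0 w)
    exact he'.comp (continuous_mulSingle (A := fun i => (F i).carrier) i0)
  have hcomm : ∀ a b : (F i0).carrier, a * b = b * a := by
    intro a b
    have h1 : ψ (a*b) = ψ (b*a) := by
      rw [map_mul, map_mul, mul_comm]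
    calc a * b = ρ (ψ (a*b)) := (hρψ _).symm
    _ = ρ (ψ (b*a)) := by rw [h1]
    _ = b * a := hρψ _
  -- the idempotent on SGsub
  set πf : SGsub → SGsub := fun c => (ψ (ρ (ofAdd c))).toAdd with hπfdef
  have hπsmul : ∀ (m : ℕ) (c : SGsub), πf (m • c) = m • πf c := by
    intro m c
    show (ψ (ρ (ofAdd (m • c)))).toAdd = m • (ψ (ρ (ofAdd c))).toAdd
    rw [ofAdd_nsmul, map_pow, map_pow, toAdd_pow]
  have hπidem : ∀ c, πf (πf c) = πf c := by
    intro c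
    show (ψ (ρ (ofAdd ((ψ (ρ (ofAdd c))).toAdd)))).toAdd = _
    rw [ofAdd_toAdd, hρψ]
  -- the torsion element in SGsub
  set τ : SGsub := (ψ t).toAdd with hτdef
  have hτfix : πf τ = τ := by
    show (ψ (ρ (ofAdd ((ψ t).toAdd)))).toAdd = (ψ t).toAdd
    rw [ofAdd_toAdd, hρψ]
  have hτ0 : τ ≠ 0 := by
    intro h0
    apply ht1
    have h1 : ψ t = 1 := by
      have := congrArg ofAdd h0
      rwa [hτdef, ofAdd_toAdd] at this
    calc t = ρ (ψ t) := (hρψ t).symm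
    _ = ρ 1 := by rw [h1]
    _ = 1 := map_one ρ
  have hτtors : n • τ = 0 := by
    show n • (ψ t).toAdd = 0
    rw [← toAdd_pow, ← map_pow, htn, map_one]
    rfl
  have h2p : (2:ℕ)^n • τ = 0 := two_pow_smul_eq_zero hn hτtors
  -- minimal 2-power exponent
  have hexa : ∃ a, (2:ℕ)^a • τ = 0 := ⟨n, h2p⟩
  have ha : (2:ℕ)^(Nat.find hexa) • τ = 0 := Nat.find_spec hexa
  have ha0 : Nat.find hexa ≠ 0 := by
    intro h0
    apply hτ0
    rw [h0, pow_zero, one_smul] at ha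
    exact ha
  set a := Nat.find hexa with hadef
  set σ : SGsub := 2^(a-1) • τ with hσdef
  have hσ0 : σ ≠ 0 := by
    intro h0
    exact (Nat.find_min hexa (m := a - 1) (by omega)) h0
  have hσfix : πf σ = σ := by rw [hσdef, hπsmul, hτfix]
  have hpowa : 2 * 2^(a-1) = 2^a := by
    have haa : a - 1 + 1 = a := by omega
    calc 2 * 2^(a-1) = 2^(a-1) * 2 := by ring
    _ = 2^(a-1+1) := (pow_succ 2 (a-1)).symm
    _ = 2^a := by rw [haa]
  have h2σ : 2 • σ = 0 := by
    rw [hσdef, smul_smul, hpowa]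
    exact ha
  -- the height
  have hexQ : ∃ m, ¬ ∃ c : SGsub, πf c = c ∧ σ = 2^(m+1) • c := by
    obtain ⟨j0, hj0⟩ : ∃ j, (σ : Amb) j ≠ 0 := by
      by_contra hall
      push_neg at hall
      exact hσ0 (Subtype.ext (funext hall))
    refine ⟨j0 + 1, ?_⟩
    rintro ⟨c, -, hc⟩
    apply hj0
    have h1 := congrFun (congrArg Subtype.val hc) j0
    rw [h1, coord_nsmul, zmod_nsmul_eq_zero_iff]
    exact dvd_mul_right _ _
  set h := Nat.find hexQ with hhdef
  have hnot : ¬ ∃ c : SGsub, πf c = c ∧ σ = 2^(h+1) • c := Nat.find_spec hexQ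
  have hQh : ∃ c : SGsub, πf c = c ∧ σ = 2^h • c := by
    rcases Nat.eq_zero_or_pos h with h0 | hpos
    · exact ⟨σ, hσfix, by rw [h0, pow_zero, one_smul]⟩
    · have hmin := Nat.find_min hexQ (m := h - 1) (by omega)
      rw [not_not] at hmin
      obtain ⟨c, hfix, hc⟩ := hmin
      refine ⟨c, hfix, ?_⟩
      rwa [show h - 1 + 1 = h by omega] at hc
  obtain ⟨sS, hsfix, hσs⟩ := hQh
  have hout : ¬ ∃ c : SGsub, σ = 2^(h+1) • c := by
    rintro ⟨c, hc⟩
    refine hnot ⟨πf c, hπidem c, ?_⟩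
    calc σ = πf σ := hσfix.symm
    _ = πf (2^(h+1) • c) := by rw [← hc]
    _ = 2^(h+1) • πf c := hπsmul _ _
  -- coordinates of sS
  have hs2 : (2:ℕ)^(h+1) • sS = 0 := by
    have heq : (2:ℕ)^(h+1) • sS = 2 • σ := by
      rw [hσs, smul_smul]
      congr 1
      ring
    rw [heq, h2σ]
  have hsev : ∀ j, 2 ∣ (((sS : Amb)) j).val := tors_coords_even hs2
  have hσcoord : ∀ j, (σ : Amb) j = 2^h • ((sS : Amb) j) := by
    intro j
    rw [hσs, coord_nsmul]
  have hσlow : ∀ j, j < h → (σ : Amb) j = 0 := by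
    intro j hj
    rw [hσcoord j, zmod_nsmul_eq_zero_iff]
    obtain ⟨v', hv'⟩ := hsev j
    rw [hv']
    have heq : (2:ℕ)^h * (2 * v') = 2^(h+1) * v' := by ring
    rw [heq]
    exact Dvd.dvd.mul_right (pow_dvd_pow 2 (by omega)) v'
  have hσh : (σ : Amb) h ≠ 0 := by
    intro hz
    apply hout
    apply exists_preimage h2σ (h := h)
    intro j hj
    rcases Nat.lt_or_ge j h with hlt | hge
    · exact hσlow j hlt
    · have : j = h := by omega
      rw [this]
      exact hz
  have hv2 : 2 ∣ ((sS : Amb) h).val := hsev h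
  have hv4 : ¬ 4 ∣ ((sS : Amb) h).val := by
    intro h4
    apply hσh
    rw [hσcoord h, zmod_nsmul_eq_zero_iff]
    obtain ⟨v4, hv4'⟩ := h4
    rw [hv4']
    have heq : (2:ℕ)^h * (4 * v4) = 2^(h+2) * v4 := by ring
    rw [heq]
    exact dvd_mul_right _ _
  have hw4 : 4 ∣ ((sS : Amb) (h+1)).val := by
    have hz : (2:ℕ)^(h+1) • ((sS : Amb) (h+1)) = 0 := by
      have := congrFun (congrArg Subtype.val hs2) (h+1)
      rwa [coord_nsmul] at this
    rw [zmod_nsmul_eq_zero_iff] at hz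
    obtain ⟨q, hq⟩ := hz
    have heq : (2:ℕ)^(h+1+2) * q = 2^(h+1) * (4 * q) := by ring
    rw [heq] at hq
    have hpos : 0 < (2:ℕ)^(h+1) := by positivity
    exact ⟨q, Nat.eq_of_mul_eq_mul_left hpos hq⟩
  -- the detector values
  have hmod4 : (Df h sS).val % 4 = 2 := Df_val_mod4 h sS hv2 hv4 hw4
  have hqodd : ¬ 2 ∣ ((Df h sS).val / 2) := by omega
  have hcop : Nat.Coprime ((Df h sS).val / 2) (2^(h+1)) :=
    Nat.Coprime.pow_right _
      (Nat.coprime_comm.mp (Nat.prime_two.coprime_iff_not_dvd.mpr hqodd))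
  set uu : (ZMod (2^(h+1)))ˣ := ZMod.unitOfCoprime _ hcop with huudef
  have huu : (uu : ZMod (2^(h+1))) = gfun h sS := by
    rw [huudef, ZMod.coe_unitOfCoprime]
    rfl
  set c0 : ZMod (2^(h+1)) := ((uu⁻¹ : (ZMod (2^(h+1)))ˣ) : ZMod (2^(h+1))) with hc0def
  have hc0gs : c0 * gfun h sS = 1 := by
    rw [← huu, hc0def, ← Units.val_mul, inv_mul_cancel, Units.val_one]
  -- sW and the splitting homomorphisms
  set sW : (F i0).carrier := ρ (ofAdd sS) with hsWdef
  have hψsW : ψ sW = ofAdd sS := by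
    have h1 : ψ (ρ (ofAdd sS)) = ofAdd (πf sS) := by
      rw [hπfdef, ofAdd_toAdd]
    rw [hsWdef, h1, hsfix]
  have hsWN : sW ^ (2^(h+1)) = 1 := by
    have h1 : ψ (sW ^ (2^(h+1))) = 1 := by
      rw [map_pow, hψsW, ← ofAdd_nsmul, hs2, ofAdd_zero]
    calc sW ^ (2^(h+1)) = ρ (ψ (sW ^ (2^(h+1)))) := (hρψ _).symm
    _ = ρ 1 := by rw [h1]
    _ = 1 := map_one ρ
  have hpowmod : ∀ mN : ℕ, sW ^ (mN % (2^(h+1))) = sW ^ mN := by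
    intro mN
    conv_rhs => rw [← Nat.div_add_mod mN (2^(h+1))]
    rw [pow_add sW, pow_mul sW, hsWN, one_pow, one_mul]
  set gW : (F i0).carrier →* Multiplicative (ZMod (2^(h+1))) :=
    MonoidHom.mk' (fun x => ofAdd (gA h ((ψ x).toAdd))) (by
      intro x1 x2
      show ofAdd (gA h ((ψ (x1*x2)).toAdd))
        = ofAdd (gA h ((ψ x1).toAdd)) * ofAdd (gA h ((ψ x2).toAdd))
      rw [map_mul ψ x1 x2, toAdd_mul, map_add, ofAdd_add]) with hgWdef
  have hgWs : gW sW = ofAdd (gfun h sS) := by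
    show ofAdd (gA h ((ψ sW).toAdd)) = ofAdd (gfun h sS)
    rw [hψsW, toAdd_ofAdd, gA_apply]
  set sec : Multiplicative (ZMod (2^(h+1))) →* (F i0).carrier :=
    MonoidHom.mk' (fun z => sW ^ ((c0 * z.toAdd).val)) (by
      intro z1 z2
      show sW ^ ((c0 * (z1*z2).toAdd).val) = _
      rw [toAdd_mul, mul_add, ZMod.val_add, hpowmod, pow_add sW]) with hsecdef
  have hgWsec : ∀ z, gW (sec z) = z := by
    intro z
    show ofAdd (gA h ((ψ (sW ^ ((c0 * z.toAdd).val))).toAdd)) = z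
    rw [map_pow, hψsW, ← ofAdd_nsmul, toAdd_ofAdd, map_nsmul, gA_apply]
    have hv : ((c0 * z.toAdd).val : ℕ) • gfun h sS = z.toAdd := by
      rw [nsmul_eq_mul, ZMod.natCast_zmod_val, mul_comm c0 z.toAdd, mul_assoc, hc0gs, mul_one]
    rw [hv, ofAdd_toAdd]
  have hseccont : Continuous ⇑sec := continuous_of_discreteTopology
  have hgWcont : Continuous ⇑gW := by
    show Continuous (fun x => ofAdd (gA h ((ψ x).toAdd)))
    have h1 : Continuous (fun x : (F i0).carrier => (ψ x).toAdd) :=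
      continuous_toAdd.comp hψcont
    exact continuous_ofAdd.comp ((gfun_cont h).comp h1)
  -- the kernel is closed
  have hAkclosed : IsClosed ((gW.ker : Subgroup (F i0).carrier) : Set (F i0).carrier) := by
    have hpre : ((gW.ker : Subgroup (F i0).carrier) : Set (F i0).carrier) = ⇑gW ⁻¹' {1} := by
      ext w
      simp [MonoidHom.mem_ker]
    rw [hpre]
    exact (isClosed_singleton).preimage hgWcont
  haveI : CompactSpace ↥gW.ker := isCompact_iff_compactSpace.mp (hAkclosed.isCompact)
  -- commutativity instance
  letI : CommGroup (F i0).carrier :=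
    { (inferInstance : Group (F i0).carrier) with mul_comm := hcomm }
  -- the splitting isomorphism
  set Φ : (F i0).carrier → (↥gW.ker × Multiplicative (ZMod (2^(h+1)))) :=
    fun x => (⟨x * (sec (gW x))⁻¹, by
      rw [MonoidHom.mem_ker, map_mul, map_inv, hgWsec, mul_inv_cancel]⟩, gW x) with hΦdef
  set Ψi : (↥gW.ker × Multiplicative (ZMod (2^(h+1)))) → (F i0).carrier :=
    fun p => (p.1 : (F i0).carrier) * sec p.2 with hΨidef
  have hΨΦ : ∀ x, Ψi (Φ x) = x := by
    intro x
    show (x * (sec (gW x))⁻¹) * sec (gW x) = x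
    rw [inv_mul_cancel_right]
  have hΦΨ : ∀ p, Φ (Ψi p) = p := by
    rintro ⟨⟨aval, haA⟩, z⟩
    have hgWv : gW (aval * sec z) = z := by
      rw [map_mul, MonoidHom.mem_ker.mp haA, one_mul, hgWsec]
    refine Prod.ext ?_ ?_
    · apply Subtype.ext
      show (aval * sec z) * (sec (gW (aval * sec z)))⁻¹ = aval
      rw [hgWv, mul_inv_cancel_right]
    · exact hgWv
  have hΦmul : ∀ x y, Φ (x * y) = Φ x * Φ y := by
    intro x y
    refine Prod.ext ?_ ?_
    · apply Subtype.ext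
      show (x*y) * (sec (gW (x*y)))⁻¹ =
        (x * (sec (gW x))⁻¹) * (y * (sec (gW y))⁻¹)
      rw [map_mul gW, map_mul sec, mul_inv, mul_mul_mul_comm]
    · exact map_mul gW x y
  have hc1 : Continuous Φ := by
    apply Continuous.prodMk
    · apply Continuous.subtype_mk
      exact continuous_id.mul ((hseccont.comp hgWcont).inv)
    · exact hgWcont
  have hc2 : Continuous Ψi := by
    exact (continuous_subtype_val.comp continuous_fst).mul (hseccont.comp continuous_snd)
  have htop : IsTopIso ((F i0).carrier) (↥gW.ker × Multiplicative (ZMod (2^(h+1)))) := by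
    refine ⟨{ toFun := Φ
              invFun := Ψi
              left_inv := hΨΦ
              right_inv := hΦΨ
              map_mul' := hΦmul }, ?_, ?_⟩
    · exact hc1
    · exact hc2
  rcases hind i0 (↥gW.ker) (Multiplicative (ZMod (2^(h+1)))) htop with hA1 | hB1
  · -- kernel trivial: the distinguished element would be torsion
    have hker : (e (ofAdd x0) i0) ^ (2^(h+1)) ∈ gW.ker := by
      rw [MonoidHom.mem_ker, map_pow]
      have h1 : (gW (e (ofAdd x0) i0)) ^ (2^(h+1))
          = ofAdd ((2^(h+1) : ℕ) • (gW (e (ofAdd x0) i0)).toAdd) := by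
        rw [ofAdd_nsmul, ofAdd_toAdd]
      rw [h1]
      have h2 : ((2:ℕ)^(h+1) : ℕ) • (gW (e (ofAdd x0) i0)).toAdd = 0 := by
        rw [nsmul_eq_mul]
        norm_cast
        rw [ZMod.natCast_self, zero_mul]
      rw [h2, ofAdd_zero]
    have h1 := hA1 ⟨_, hker⟩
    have h2 : (e (ofAdd x0) i0) ^ (2^(h+1)) = 1 := by
      have := congrArg Subtype.val h1
      simpa using this
    exact hyout (subset_closure ⟨2^(h+1), by positivity, h2⟩)
  · -- cyclic factor trivial: impossible
    have h1 := hB1 (ofAdd 1)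
    have h2 : (1 : ZMod (2^(h+1))) = 0 := by
      have := congrArg Multiplicative.toAdd h1
      rwa [toAdd_ofAdd, toAdd_one] at this
    haveI : Fact (1 < 2^(h+1)) := ⟨by
      have : (2:ℕ)^1 ≤ 2^(h+1) := Nat.pow_le_pow_right (by omega) (by omega)
      omega⟩
    exact one_ne_zero h2
end
end

section
/- Let G be a small indecomposable profinite group and let φ, ψ : G → G be normal continuous endomorphisms such that the map φ⊙ψ defined by (φ⊙ψ)(a) = φ(a)ψ(a) is an endomorphism of G. If φ⊙ψ is an automorphism of G, then φ or ψ is an automorphism of G. -/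
namespace SumAutoAux

open Subgroup

section IterHom

variable {G : Type*} [Group G]

def iterHom (f : G →* G) : ℕ → (G →* G)
  | 0 => MonoidHom.id G
  | (K+1) => (iterHom f K).comp f

theorem iterHom_zero_apply (f : G →* G) (x : G) : iterHom f 0 x = x := rfl

theorem iterHom_succ_apply (f : G →* G) (K : ℕ) (x : G) :
    iterHom f (K+1) x = iterHom f K (f x) := rfl

theorem iterHom_succ_apply' (f : G →* G) (K : ℕ) (x : G) :
    iterHom f (K+1) x = f (iterHom f K x) := by
  induction K generalizing x with
  | zero => rfl
  | succ K ih => rw [iterHom_succ_apply, ih, ← iterHom_succ_apply]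

theorem iterHom_add_apply (f : G →* G) (a b : ℕ) (x : G) :
    iterHom f (a + b) x = iterHom f a (iterHom f b x) := by
  induction b generalizing x with
  | zero => rfl
  | succ b ih =>
      show iterHom f ((a + b) + 1) x = _
      rw [iterHom_succ_apply, iterHom_succ_apply, ih]

theorem iterHom_normal {f : G →* G} (hfn : ∀ a b : G, f (a * b * a⁻¹) = a * f b * a⁻¹)
    (K : ℕ) : ∀ a b : G, iterHom f K (a * b * a⁻¹) = a * iterHom f K b * a⁻¹ := by
  induction K with
  | zero => intro a b; rfl
  | succ K ih =>
      intro a b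
      rw [iterHom_succ_apply', ih, hfn, ← iterHom_succ_apply']

theorem iterHom_continuous [TopologicalSpace G] {f : G →* G} (hfc : Continuous f) (K : ℕ) :
    Continuous (iterHom f K) := by
  induction K with
  | zero => exact continuous_id
  | succ K ih =>
      have : ⇑(iterHom f (K+1)) = (iterHom f K) ∘ f := rfl
      rw [this]
      exact ih.comp hfc

end IterHom

section Mn

variable {G : Type} [Group G] [TopologicalSpace G]

def Mn (G : Type) [Group G] [TopologicalSpace G] (n : ℕ) : Subgroup G :=
  sInf {H : Subgroup G | H.Normal ∧ IsOpen (H : Set G) ∧ H.index ≤ n}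

theorem Mn_normal (n : ℕ) : (Mn G n).Normal := by
  constructor
  intro x hx g
  rw [Mn, mem_sInf] at hx ⊢
  intro H hH
  exact hH.1.conj_mem _ (hx H hH) g

theorem Mn_set_finite (hG : SmallGroup G) (n : ℕ) :
    {H : Subgroup G | H.Normal ∧ IsOpen (H : Set G) ∧ H.index ≤ n}.Finite := by
  apply Set.Finite.subset (Set.Finite.biUnion (Set.finite_Iic n) (fun i _ => hG i))
  intro H hH
  exact Set.mem_biUnion hH.2.2 ⟨hH.1, hH.2.1, rfl⟩

theorem Mn_isOpen (hG : SmallGroup G) (n : ℕ) : IsOpen ((Mn G n : Set G)) := by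
  have h : ((Mn G n : Set G)) =
      ⋂ H ∈ {H : Subgroup G | H.Normal ∧ IsOpen (H : Set G) ∧ H.index ≤ n}, (H : Set G) :=
    coe_sInf _
  rw [h]
  exact Set.Finite.isOpen_biInter (Mn_set_finite hG n) (fun H hH => hH.2.1)

theorem Mn_antitone : Antitone (Mn G) := by
  intro m n hmn
  exact sInf_le_sInf (fun H hH => ⟨hH.1, hH.2.1, hH.2.2.trans hmn⟩)

theorem Mn_le_of_mem {H : Subgroup G} (hn : H.Normal) (ho : IsOpen (H : Set G)) :
    Mn G H.index ≤ H := sInf_le ⟨hn, ho, le_refl _⟩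

variable [IsTopologicalGroup G] [CompactSpace G]

theorem Mn_index_ne_zero (hG : SmallGroup G) (n : ℕ) : (Mn G n).index ≠ 0 := by
  have : Finite (G ⧸ (Mn G n)) := quotient_finite_of_isOpen _ (Mn_isOpen hG n)
  exact index_ne_zero_of_finite

theorem map_Mn_le (f : G →* G) (hf : Continuous f) (n : ℕ) {x : G} (hx : x ∈ Mn G n) :
    f x ∈ Mn G n := by
  rw [Mn, mem_sInf]
  intro H hH
  have hcm : (H.comap f) ∈ {H : Subgroup G | H.Normal ∧ IsOpen (H : Set G) ∧ H.index ≤ n} := by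
    refine ⟨hH.1.comap f, hH.2.1.preimage hf, ?_⟩
    have h1 : (H.comap f).index = H.relIndex f.range := index_comap H f
    have h2 : H.relIndex f.range ∣ H.index := by
      haveI := hH.1
      exact relIndex_dvd_index_of_normal H f.range
    have h0 : H.index ≠ 0 := by
      have : Finite (G ⧸ H) := quotient_finite_of_isOpen _ hH.2.1
      exact index_ne_zero_of_finite
    calc (H.comap f).index ≤ H.index := h1 ▸ Nat.le_of_dvd (Nat.pos_of_ne_zero h0) h2
      _ ≤ n := hH.2.2
  rw [Mn, mem_sInf] at hx
  exact hx _ hcm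

theorem iterHom_Mn_mem {f : G →* G} (hf : Continuous f) (K n : ℕ) {x : G}
    (hx : x ∈ Mn G n) : iterHom f K x ∈ Mn G n := by
  induction K with
  | zero => exact hx
  | succ K ih => rw [iterHom_succ_apply']; exact map_Mn_le f hf n ih

variable [T2Space G] [TotallyDisconnectedSpace G]

theorem iInf_Mn_eq_bot : ⨅ n, Mn G n = ⊥ := by
  rw [eq_bot_iff]
  intro x hx
  rw [mem_bot]
  by_contra hx1
  have hU : IsOpen ({x}ᶜ : Set G) := isClosed_singleton.isOpen_compl
  have h1U : (1:G) ∈ ({x}ᶜ : Set G) := by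
    simp only [Set.mem_compl_iff, Set.mem_singleton_iff]
    exact fun h => hx1 h.symm
  obtain ⟨V, hV, h1V, hVU⟩ := compact_exists_isClopen_in_isOpen hU h1U
  obtain ⟨H, hH⟩ := IsTopologicalGroup.exist_openNormalSubgroup_sub_clopen_nhds_of_one hV h1V
  have hx' : x ∈ H.toSubgroup := by
    have hmem : x ∈ Mn G H.toSubgroup.index := mem_iInf.mp hx H.toSubgroup.index
    exact Mn_le_of_mem H.isNormal' H.isOpen' hmem
  exact hVU (hH hx') rfl

theorem exists_Mn_subset (hG : SmallGroup G) {U : Set G} (hU : IsOpen U) (h1 : (1:G) ∈ U) :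
    ∃ n, (Mn G n : Set G) ⊆ U := by
  by_contra hc
  push_neg at hc
  have hne : ∀ n, ((Mn G n : Set G) ∩ Uᶜ).Nonempty := by
    intro n
    rcases Set.not_subset.mp (hc n) with ⟨y, hy1, hy2⟩
    exact ⟨y, hy1, hy2⟩
  have hclosed : ∀ n, IsClosed ((Mn G n : Set G) ∩ Uᶜ) :=
    fun n => ((Mn G n).isClosed_of_isOpen (Mn_isOpen hG n)).inter hU.isClosed_compl
  have hdec : ∀ n, (Mn G (n+1) : Set G) ∩ Uᶜ ⊆ (Mn G n : Set G) ∩ Uᶜ :=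
    fun n => Set.inter_subset_inter_left _ (Mn_antitone (Nat.le_succ n))
  obtain ⟨y, hy⟩ := IsCompact.nonempty_iInter_of_sequence_nonempty_isCompact_isClosed _
    hdec hne ((hclosed 0).isCompact) hclosed
  have hy' : y ∈ ⨅ n, Mn G n := mem_iInf.mpr (fun n => ((Set.mem_iInter.mp hy n).1))
  rw [iInf_Mn_eq_bot, mem_bot] at hy'
  exact (Set.mem_iInter.mp hy 0).2 (hy' ▸ h1)

theorem mem_closed_of_approx (hG : SmallGroup G) {S : Set G} (hS : IsClosed S) {a : G}
    (h : ∀ n, ∃ s ∈ S, a⁻¹ * s ∈ Mn G n) : a ∈ S := by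
  by_contra ha
  have hU : IsOpen ((fun g => a * g) ⁻¹' Sᶜ) := (hS.isOpen_compl).preimage (continuous_mul_left a)
  have h1 : (1:G) ∈ (fun g => a * g) ⁻¹' Sᶜ := by simpa using ha
  obtain ⟨n, hn⟩ := exists_Mn_subset hG hU h1
  obtain ⟨s, hs, hmem⟩ := h n
  have h2 := hn hmem
  simp only [Set.mem_preimage, Set.mem_compl_iff, mul_inv_cancel_left] at h2
  exact h2 hs

end Mn

end SumAutoAux

namespace SumAutoAux

open Subgroup

section Dich

open Pointwise

variable {G : Type} [Group G] [TopologicalSpace G] [IsTopologicalGroup G] [CompactSpace G]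
  [T2Space G] [TotallyDisconnectedSpace G]

theorem dichotomy (hG : SmallGroup G) (hind : Indecomposable G) (f : G →* G)
    (hfc : Continuous f) (hfn : ∀ a b : G, f (a * b * a⁻¹) = a * f b * a⁻¹) :
    Function.Bijective f ∨ ∀ n : ℕ, ∃ K : ℕ, ∀ x : G, iterHom f K x ∈ Mn G n := by
  classical
  set C : ℕ → ℕ → Subgroup G := fun n K => (iterHom f K).range ⊔ Mn G n with hCdef
  set D : ℕ → ℕ → Subgroup G := fun n K => (Mn G n).comap (iterHom f K) with hDdef
  -- basic facts
  have hRanti : ∀ {K L : ℕ}, K ≤ L → (iterHom f L).range ≤ (iterHom f K).range := by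
    intro K L hKL
    obtain ⟨d, rfl⟩ := Nat.exists_eq_add_of_le hKL
    rintro x ⟨y, rfl⟩
    exact ⟨iterHom f d y, (iterHom_add_apply f K d y).symm⟩
  have hCanti : ∀ n, ∀ {K L : ℕ}, K ≤ L → C n L ≤ C n K := by
    intro n K L hKL
    exact sup_le_sup_right (hRanti hKL) _
  have hDmono : ∀ n, ∀ {K L : ℕ}, K ≤ L → D n K ≤ D n L := by
    intro n K L hKL x hx
    obtain ⟨d, rfl⟩ := Nat.exists_eq_add_of_le hKL
    show iterHom f (K + d) x ∈ Mn G n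
    rw [Nat.add_comm, iterHom_add_apply]
    exact iterHom_Mn_mem hfc d n hx
  have hMleC : ∀ n K, Mn G n ≤ C n K := fun n K => le_sup_right
  have hMleD : ∀ n K, Mn G n ≤ D n K := fun n K μ hμ => iterHom_Mn_mem hfc K n hμ
  have memC : ∀ n K a, a ∈ C n K ↔ ∃ y μ, μ ∈ Mn G n ∧ iterHom f K y * μ = a := by
    intro n K a
    haveI := Mn_normal (G := G) n
    constructor
    · intro h
      have h2 : a ∈ ((iterHom f K).range : Set G) * (Mn G n : Set G) := by
        rw [← Subgroup.mul_normal]; exact h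
      rcases h2 with ⟨x, hx, μ, hμ, hxa⟩
      rcases hx with ⟨y, rfl⟩
      exact ⟨y, μ, hμ, hxa⟩
    · rintro ⟨y, μ, hμ, rfl⟩
      exact mul_mem (mem_sup_left ⟨y, rfl⟩) (mem_sup_right hμ)
  -- index facts
  have hCindex : ∀ n K, (C n K).index ∣ (Mn G n).index :=
    fun n K => index_dvd_of_le (hMleC n K)
  have hDindex : ∀ n K, (D n K).index ∣ (Mn G n).index :=
    fun n K => index_dvd_of_le (hMleD n K)
  have hMne : ∀ n, (Mn G n).index ≠ 0 := Mn_index_ne_zero hG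
  have hCne : ∀ n K, (C n K).index ≠ 0 := by
    intro n K h
    exact hMne n (Nat.eq_zero_of_zero_dvd (h ▸ hCindex n K))
  have hDne : ∀ n K, (D n K).index ≠ 0 := by
    intro n K h
    exact hMne n (Nat.eq_zero_of_zero_dvd (h ▸ hDindex n K))
  -- one-step stabilization exists
  have hCex : ∀ n, ∃ K, C n K = C n (K+1) := by
    intro n
    by_contra hne
    push_neg at hne
    have hstrict : StrictMono (fun K => (C n K).index) := by
      apply strictMono_nat_of_lt_succ
      intro K
      have hle : C n (K+1) ≤ C n K := hCanti n (Nat.le_succ K)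
      have hdvd : (C n K).index ∣ (C n (K+1)).index := index_dvd_of_le hle
      have hneq : (C n K).index ≠ (C n (K+1)).index := by
        intro heq
        apply hne K
        have hrel := relIndex_mul_index hle
        rw [← heq] at hrel
        have h1 : (C n (K+1)).relIndex (C n K) = 1 :=
          Nat.eq_of_mul_eq_mul_right (Nat.pos_of_ne_zero (hCne n K)) (by rw [hrel, one_mul])
        exact le_antisymm (relIndex_eq_one.mp h1) hle
      exact lt_of_le_of_ne (Nat.le_of_dvd (Nat.pos_of_ne_zero (hCne n (K+1))) hdvd) hneq
    have h1 := hstrict.le_apply (x := (Mn G n).index + 1)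
    have h2 : (C n ((Mn G n).index + 1)).index ≤ (Mn G n).index :=
      Nat.le_of_dvd (Nat.pos_of_ne_zero (hMne n)) (hCindex n _)
    omega
  have hDex : ∀ n, ∃ K, D n K = D n (K+1) := by
    intro n
    by_contra hne
    push_neg at hne
    have hstep : ∀ K, (D n (K+1)).index < (D n K).index := by
      intro K
      have hle : D n K ≤ D n (K+1) := hDmono n (Nat.le_succ K)
      have hdvd : (D n (K+1)).index ∣ (D n K).index := index_dvd_of_le hle
      have hneq : (D n (K+1)).index ≠ (D n K).index := by
        intro heq
        apply hne K
        have hrel := relIndex_mul_index hle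
        rw [heq] at hrel
        have h1 : (D n K).relIndex (D n (K+1)) = 1 :=
          Nat.eq_of_mul_eq_mul_right (Nat.pos_of_ne_zero (hDne n K)) (by rw [hrel, one_mul])
        exact le_antisymm hle (relIndex_eq_one.mp h1)
      exact lt_of_le_of_ne (Nat.le_of_dvd (Nat.pos_of_ne_zero (hDne n K)) hdvd) hneq
    have hbound : ∀ K, (D n K).index + K ≤ (D n 0).index := by
      intro K
      induction K with
      | zero => omega
      | succ K ih => have := hstep K; omega
    have := hbound ((D n 0).index + 1)
    omega
  -- propagation
  have hCstep : ∀ n K, C n K = C n (K+1) → C n (K+1) = C n (K+2) := by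
    intro n K h
    apply le_antisymm _ (hCanti n (Nat.le_succ (K+1)))
    apply sup_le _ (hMleC n (K+2))
    rintro x ⟨y, rfl⟩
    have h1 : iterHom f K y ∈ C n (K+1) := h ▸ mem_sup_left ⟨y, rfl⟩
    rcases (memC n (K+1) _).mp h1 with ⟨z, μ, hμ, hz⟩
    apply (memC n (K+2) _).mpr
    refine ⟨z, f μ, map_Mn_le f hfc n hμ, ?_⟩
    rw [iterHom_succ_apply' f (K+1) z, ← map_mul, hz, ← iterHom_succ_apply']
  have hDstep : ∀ n K, D n K = D n (K+1) → D n (K+1) = D n (K+2) := by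
    intro n K h
    ext x
    constructor
    · intro hx
      have : f x ∈ D n K := by
        show iterHom f K (f x) ∈ Mn G n
        rw [← iterHom_succ_apply]
        exact hx
      have h2 : f x ∈ D n (K+1) := h ▸ this
      show iterHom f (K+2) x ∈ Mn G n
      rw [iterHom_succ_apply]
      exact h2
    · intro hx
      have h2 : f x ∈ D n (K+1) := by
        show iterHom f (K+1) (f x) ∈ Mn G n
        rw [← iterHom_succ_apply]
        exact hx
      have h3 : f x ∈ D n K := h ▸ h2
      show iterHom f (K+1) x ∈ Mn G n
      rw [iterHom_succ_apply]
      exact h3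
  have hCprop : ∀ n K, C n K = C n (K+1) → ∀ d, C n (K + d) = C n K := by
    intro n K h d
    induction d with
    | zero => rfl
    | succ d ih =>
        have hstep2 : C n (K + d) = C n (K + d + 1) := by
          clear ih
          induction d with
          | zero => exact h
          | succ d ih2 => exact hCstep n (K + d) ih2
        rw [show K + (d+1) = (K + d) + 1 from rfl, ← hstep2, ih]
  have hDprop : ∀ n K, D n K = D n (K+1) → ∀ d, D n (K + d) = D n K := by
    intro n K h d
    induction d with
    | zero => rfl
    | succ d ih =>
        have hstep2 : D n (K + d) = D n (K + d + 1) := by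
          clear ih
          induction d with
          | zero => exact h
          | succ d ih2 => exact hDstep n (K + d) ih2
        rw [show K + (d+1) = (K + d) + 1 from rfl, ← hstep2, ih]
  have hstab : ∀ n, ∃ K, 1 ≤ K ∧ ∀ L, K ≤ L → C n L = C n K ∧ D n L = D n K := by
    intro n
    obtain ⟨Kc, hKc⟩ := hCex n
    obtain ⟨Kd, hKd⟩ := hDex n
    refine ⟨max (max Kc Kd) 1, le_max_right _ _, ?_⟩
    intro L hL
    have hKcK : Kc ≤ max (max Kc Kd) 1 := le_trans (le_max_left _ _) (le_max_left _ _)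
    have hKdK : Kd ≤ max (max Kc Kd) 1 := le_trans (le_max_right _ _) (le_max_left _ _)
    have hC1 : ∀ L', Kc ≤ L' → C n L' = C n Kc := by
      intro L' hL'
      obtain ⟨d, rfl⟩ := Nat.exists_eq_add_of_le hL'
      exact hCprop n Kc hKc d
    have hD1 : ∀ L', Kd ≤ L' → D n L' = D n Kd := by
      intro L' hL'
      obtain ⟨d, rfl⟩ := Nat.exists_eq_add_of_le hL'
      exact hDprop n Kd hKd d
    constructor
    · rw [hC1 L (le_trans hKcK hL), hC1 _ hKcK]
    · rw [hD1 L (le_trans hKdK hL), hD1 _ hKdK]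
  choose K hK1 hK2 using hstab
  set A' : ℕ → Subgroup G := fun n => C n (K n) with hA'def
  set B' : ℕ → Subgroup G := fun n => D n (K n) with hB'def
  -- Fitting at each level
  have hADinter : ∀ n, A' n ⊓ B' n = Mn G n := by
    intro n
    apply le_antisymm
    · rintro z ⟨hzA, hzB⟩
      rcases (memC n (K n) z).mp hzA with ⟨y, μ, hμ, hyz⟩
      have hyD : y ∈ D n (K n + K n) := by
        show iterHom f (K n + K n) y ∈ Mn G n
        rw [iterHom_add_apply]
        have h1 : iterHom f (K n) y = z * μ⁻¹ := by rw [← hyz]; group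
        rw [h1, map_mul, map_inv]
        exact mul_mem hzB (inv_mem (iterHom_Mn_mem hfc (K n) n hμ))
      have hyD' : y ∈ B' n := by
        show y ∈ D n (K n)
        rw [← (hK2 n (K n + K n) (Nat.le_add_right _ _)).2]
        exact hyD
      have : iterHom f (K n) y ∈ Mn G n := hyD'
      rw [← hyz]
      exact mul_mem this hμ
    · exact le_inf (hMleC n (K n)) (hMleD n (K n))
  have hdecomp : ∀ n a, ∃ x y : G, x ∈ A' n ∧ y ∈ B' n ∧ x * y = a := by
    intro n a
    have h1 : iterHom f (K n) a ∈ C n (K n + K n) := by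
      rw [(hK2 n (K n + K n) (Nat.le_add_right _ _)).1]
      exact mem_sup_left ⟨a, rfl⟩
    rcases (memC n (K n + K n) _).mp h1 with ⟨b, μ, hμ, hb⟩
    refine ⟨iterHom f (K n) b, (iterHom f (K n) b)⁻¹ * a, mem_sup_left ⟨b, rfl⟩, ?_, by group⟩
    show iterHom f (K n) ((iterHom f (K n) b)⁻¹ * a) ∈ Mn G n
    rw [map_mul, map_inv, ← iterHom_add_apply, ← hb, inv_mul_cancel_left]
    exact hμ
-- monotonicity of A', B'
  have hA'anti : ∀ {m n : ℕ}, n ≤ m → A' m ≤ A' n := by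
    intro m n h
    have hL1 : C m (max (K m) (K n)) = C m (K m) := (hK2 m _ (le_max_left _ _)).1
    have hL2 : C n (max (K m) (K n)) = C n (K n) := (hK2 n _ (le_max_right _ _)).1
    calc A' m = C m (max (K m) (K n)) := hL1.symm
      _ ≤ C n (max (K m) (K n)) := sup_le_sup_left (Mn_antitone h) _
      _ = A' n := hL2
  have hB'anti : ∀ {m n : ℕ}, n ≤ m → B' m ≤ B' n := by
    intro m n h
    have hL1 : D m (max (K m) (K n)) = D m (K m) := (hK2 m _ (le_max_left _ _)).2
    have hL2 : D n (max (K m) (K n)) = D n (K n) := (hK2 n _ (le_max_right _ _)).2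
    calc B' m = D m (max (K m) (K n)) := hL1.symm
      _ ≤ D n (max (K m) (K n)) := comap_mono (Mn_antitone h)
      _ = B' n := hL2
  -- normality
  have hrangeN : ∀ Kk : ℕ, ((iterHom f Kk).range).Normal := by
    intro Kk
    constructor
    rintro x ⟨y, rfl⟩ g
    exact ⟨g * y * g⁻¹, iterHom_normal hfn Kk g y⟩
  have hA'N : ∀ n, (A' n).Normal := by
    intro n
    haveI := hrangeN (K n)
    haveI := Mn_normal (G := G) n
    exact sup_normal _ _
  have hB'N : ∀ n, (B' n).Normal := fun n => (Mn_normal n).comap _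
  -- openness / closedness
  have hA'open : ∀ n, IsOpen ((A' n : Set G)) :=
    fun n => isOpen_mono (hMleC n (K n)) (Mn_isOpen hG n)
  have hB'open : ∀ n, IsOpen ((B' n : Set G)) :=
    fun n => isOpen_mono (hMleD n (K n)) (Mn_isOpen hG n)
  have hA'closed : ∀ n, IsClosed ((A' n : Set G)) :=
    fun n => (A' n).isClosed_of_isOpen (hA'open n)
  have hB'closed : ∀ n, IsClosed ((B' n : Set G)) :=
    fun n => (B' n).isClosed_of_isOpen (hB'open n)
  -- the global subgroups
  set A : Subgroup G := ⨅ n, A' n with hAdef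
  set B : Subgroup G := ⨅ n, B' n with hBdef
  have hAN : A.Normal := by
    constructor
    intro x hx g
    exact mem_iInf.mpr (fun n => (hA'N n).conj_mem _ (mem_iInf.mp hx n) g)
  have hBN : B.Normal := by
    constructor
    intro x hx g
    exact mem_iInf.mpr (fun n => (hB'N n).conj_mem _ (mem_iInf.mp hx n) g)
  have hAclosed : IsClosed (A : Set G) := by
    have h : (A : Set G) = ⋂ n, (A' n : Set G) := by
      rw [hAdef]; exact coe_iInf
    rw [h]
    exact isClosed_iInter hA'closed
  have hBclosed : IsClosed (B : Set G) := by
    have h : (B : Set G) = ⋂ n, (B' n : Set G) := by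
      rw [hBdef]; exact coe_iInf
    rw [h]
    exact isClosed_iInter hB'closed
  have hABdisj : Disjoint A B := by
    rw [disjoint_iff, eq_bot_iff]
    intro x hx
    have h1 : ∀ n, x ∈ Mn G n := by
      intro n
      rw [← hADinter n]
      exact ⟨mem_iInf.mp hx.1 n, mem_iInf.mp hx.2 n⟩
    have h2 : x ∈ ⨅ n, Mn G n := mem_iInf.mpr h1
    rwa [iInf_Mn_eq_bot] at h2
  have hABdecomp : ∀ a : G, ∃ x y : G, x ∈ A ∧ y ∈ B ∧ x * y = a := by
    intro a
    set E : ℕ → Set (G × G) := fun m =>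
      {p : G × G | p.1 ∈ A' m ∧ p.2 ∈ B' m ∧ p.1 * p.2 = a} with hEdef
    have hEclosed : ∀ m, IsClosed (E m) := by
      intro m
      have h1 : E m = ((fun p : G × G => p.1) ⁻¹' (A' m : Set G)) ∩
          (((fun p : G × G => p.2) ⁻¹' (B' m : Set G)) ∩
            {p : G × G | p.1 * p.2 = a}) := by
        ext p; simp [hEdef, Set.mem_inter_iff, and_assoc]
      rw [h1]
      exact ((hA'closed m).preimage continuous_fst).inter
        (((hB'closed m).preimage continuous_snd).inter
          (isClosed_eq (continuous_fst.mul continuous_snd) continuous_const))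
    have hEdec : ∀ m, E (m+1) ⊆ E m := by
      intro m p hp
      exact ⟨hA'anti (Nat.le_succ m) hp.1, hB'anti (Nat.le_succ m) hp.2.1, hp.2.2⟩
    have hEne : ∀ m, (E m).Nonempty := by
      intro m
      obtain ⟨x, y, hx, hy, hxy⟩ := hdecomp m a
      exact ⟨(x, y), hx, hy, hxy⟩
    obtain ⟨p, hp⟩ := IsCompact.nonempty_iInter_of_sequence_nonempty_isCompact_isClosed E
      hEdec hEne ((hEclosed 0).isCompact) hEclosed
    refine ⟨p.1, p.2, mem_iInf.mpr (fun n => (Set.mem_iInter.mp hp n).1),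
      mem_iInf.mpr (fun n => (Set.mem_iInter.mp hp n).2.1), (Set.mem_iInter.mp hp 0).2.2⟩
  have hcomm : ∀ x ∈ A, ∀ y ∈ B, (x : G) * y = y * x :=
    fun x hx y hy => commute_of_normal_of_disjoint A B hAN hBN hABdisj x y hx hy
  -- the isomorphism G ≃ A × B
  let ι : (↥A × ↥B) →* G :=
    { toFun := fun p => (p.1 : G) * (p.2 : G)
      map_one' := by simp
      map_mul' := by
        rintro ⟨x1, y1⟩ ⟨x2, y2⟩
        show ((x1 * x2 : ↥A) : G) * ((y1 * y2 : ↥B) : G) =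
          ((x1 : G) * y1) * ((x2 : G) * y2)
        push_cast
        have hc : (x2 : G) * y1 = (y1 : G) * x2 := hcomm x2 x2.2 y1 y1.2
        rw [mul_assoc, mul_assoc, ← mul_assoc (x2 : G), hc, mul_assoc] }
  have hιinj : Function.Injective ι := by
    rintro ⟨x1, y1⟩ ⟨x2, y2⟩ h
    have h0 : (x1 : G) * y1 = (x2 : G) * y2 := h
    have h1 : (x2 : G)⁻¹ * x1 = (y2 : G) * (y1 : G)⁻¹ := by
      have h2 : (x2 : G)⁻¹ * ((x1 : G) * y1) * (y1 : G)⁻¹ =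
          (x2 : G)⁻¹ * ((x2 : G) * y2) * (y1 : G)⁻¹ := by rw [h0]
      calc (x2 : G)⁻¹ * x1 = (x2 : G)⁻¹ * ((x1 : G) * y1) * (y1 : G)⁻¹ := by group
        _ = (x2 : G)⁻¹ * ((x2 : G) * y2) * (y1 : G)⁻¹ := h2
        _ = (y2 : G) * (y1 : G)⁻¹ := by group
    have hzA : (x2 : G)⁻¹ * x1 ∈ A := mul_mem (inv_mem x2.2) x1.2
    have hzB : (x2 : G)⁻¹ * x1 ∈ B := by
      rw [h1]; exact mul_mem y2.2 (inv_mem y1.2)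
    have hz1 : (x2 : G)⁻¹ * x1 = 1 := by
      have h3 : (x2 : G)⁻¹ * x1 ∈ A ⊓ B := ⟨hzA, hzB⟩
      rw [disjoint_iff.mp hABdisj] at h3
      exact mem_bot.mp h3
    have hz2 : (y2 : G) * (y1 : G)⁻¹ = 1 := by rw [← h1, hz1]
    have hx12 : x1 = x2 := Subtype.ext (inv_mul_eq_one.mp hz1).symm
    have hy12 : y1 = y2 := Subtype.ext (mul_inv_eq_one.mp hz2).symm
    rw [hx12, hy12]
  have hιsurj : Function.Surjective ι := by
    intro a
    obtain ⟨x, y, hx, hy, hxy⟩ := hABdecomp a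
    exact ⟨(⟨x, hx⟩, ⟨y, hy⟩), hxy⟩
  let E : (↥A × ↥B) ≃* G := MulEquiv.ofBijective ι ⟨hιinj, hιsurj⟩
  have hιc : Continuous ι :=
    (continuous_subtype_val.comp continuous_fst).mul (continuous_subtype_val.comp continuous_snd)
  haveI : CompactSpace ↥A := isCompact_iff_compactSpace.mp hAclosed.isCompact
  haveI : CompactSpace ↥B := isCompact_iff_compactSpace.mp hBclosed.isCompact
  have hEc : Continuous ⇑E := hιc
  let homeo : (↥A × ↥B) ≃ₜ G := Continuous.homeoOfEquivCompactToT2 (f := E.toEquiv) hEc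
  have hEsc : Continuous ⇑E.symm := homeo.symm.continuous
  have htopiso : IsTopIso G (↥A × ↥B) := by
    refine ⟨E.symm, hEsc, ?_⟩
    rw [MulEquiv.symm_symm]
    exact hEc
  rcases hind ↥A ↥B htopiso with hA1 | hB1
  · -- A is trivial : f is uniformly nilpotent
    have hAbot : A = ⊥ := by
      rw [eq_bot_iff]
      intro x hx
      have := hA1 ⟨x, hx⟩
      rw [mem_bot]
      exact congrArg Subtype.val this
    right
    have hA'eq : ∀ n, A' n ≤ Mn G n := by
      intro n x hx
      set F : ℕ → Set G := fun m =>
        (A' (n + m) : Set G) ∩ {y : G | x⁻¹ * y ∈ Mn G n} with hFdef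
      have hMclosed : IsClosed ((Mn G n : Set G)) :=
        (Mn G n).isClosed_of_isOpen (Mn_isOpen hG n)
      have hFcl : ∀ m, IsClosed (F m) := by
        intro m
        exact (hA'closed _).inter (hMclosed.preimage (continuous_mul_left x⁻¹))
      have hFdec : ∀ m, F (m+1) ⊆ F m := by
        intro m
        apply Set.inter_subset_inter_left
        intro y hy
        exact hA'anti (by omega) hy
      have hFne : ∀ m, (F m).Nonempty := by
        intro m
        obtain ⟨u, v, hu, hv, huv⟩ := hdecomp (n + m) x
        have hvA : v ∈ A' n := by
          have hv1 : v = u⁻¹ * x := by rw [← huv]; group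
          rw [hv1]
          exact mul_mem (inv_mem (hA'anti (Nat.le_add_right n m) hu)) hx
        have hvM : v ∈ Mn G n := by
          rw [← hADinter n]
          exact ⟨hvA, hB'anti (Nat.le_add_right n m) hv⟩
        refine ⟨u, hu, ?_⟩
        show x⁻¹ * u ∈ Mn G n
        have hu1 : x⁻¹ * u = v⁻¹ := by rw [← huv]; group
        rw [hu1]
        exact inv_mem hvM
      obtain ⟨y, hy⟩ := IsCompact.nonempty_iInter_of_sequence_nonempty_isCompact_isClosed F
        hFdec hFne ((hFcl 0).isCompact) hFcl
      have hyA : y ∈ A := by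
        apply mem_iInf.mpr
        intro j
        have h1 : y ∈ A' (n + j) := (Set.mem_iInter.mp hy j).1
        exact hA'anti (Nat.le_add_left j n) h1
      have hy1 : y = 1 := by
        rw [hAbot, mem_bot] at hyA
        exact hyA
      have := (Set.mem_iInter.mp hy 0).2
      rw [hy1] at this
      simp only [Set.mem_setOf_eq, mul_one] at this
      exact (inv_mem_iff).mp this
    intro n
    refine ⟨K n, fun x => ?_⟩
    exact hA'eq n (mem_sup_left ⟨x, rfl⟩)
  · -- B is trivial : f is bijective
    have hBbot : B = ⊥ := by
      rw [eq_bot_iff]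
      intro x hx
      have := hB1 ⟨x, hx⟩
      rw [mem_bot]
      exact congrArg Subtype.val this
    left
    have hB'eq : ∀ n, B' n ≤ Mn G n := by
      intro n x hx
      set F : ℕ → Set G := fun m =>
        (B' (n + m) : Set G) ∩ {y : G | x⁻¹ * y ∈ Mn G n} with hFdef
      have hMclosed : IsClosed ((Mn G n : Set G)) :=
        (Mn G n).isClosed_of_isOpen (Mn_isOpen hG n)
      have hFcl : ∀ m, IsClosed (F m) := by
        intro m
        exact (hB'closed _).inter (hMclosed.preimage (continuous_mul_left x⁻¹))
      have hFdec : ∀ m, F (m+1) ⊆ F m := by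
        intro m
        apply Set.inter_subset_inter_left
        intro y hy
        exact hB'anti (by omega) hy
      have hFne : ∀ m, (F m).Nonempty := by
        intro m
        obtain ⟨u, v, hu, hv, huv⟩ := hdecomp (n + m) x
        have huB : u ∈ B' n := by
          have hu1 : u = x * v⁻¹ := by rw [← huv]; group
          rw [hu1]
          exact mul_mem hx (inv_mem (hB'anti (Nat.le_add_right n m) hv))
        have huM : u ∈ Mn G n := by
          rw [← hADinter n]
          exact ⟨hA'anti (Nat.le_add_right n m) hu, huB⟩
        refine ⟨v, hv, ?_⟩
        show x⁻¹ * v ∈ Mn G n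
        have hv1 : x⁻¹ * v = (x⁻¹ * u⁻¹ * x) := by rw [← huv]; group
        rw [hv1]
        have := (Mn_normal (G := G) n).conj_mem _ (inv_mem huM) x⁻¹
        simpa using this
      obtain ⟨y, hy⟩ := IsCompact.nonempty_iInter_of_sequence_nonempty_isCompact_isClosed F
        hFdec hFne ((hFcl 0).isCompact) hFcl
      have hyB : y ∈ B := by
        apply mem_iInf.mpr
        intro j
        have h1 : y ∈ B' (n + j) := (Set.mem_iInter.mp hy j).1
        exact hB'anti (Nat.le_add_left j n) h1
      have hy1 : y = 1 := by
        rw [hBbot, mem_bot] at hyB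
        exact hyB
      have := (Set.mem_iInter.mp hy 0).2
      rw [hy1] at this
      simp only [Set.mem_setOf_eq, mul_one] at this
      exact (inv_mem_iff).mp this
    constructor
    · -- injective
      intro x y hxy
      have h1 : f (x * y⁻¹) = 1 := by
        rw [map_mul, map_inv, hxy, mul_inv_cancel]
      have h2 : ∀ n, x * y⁻¹ ∈ Mn G n := by
        intro n
        apply hB'eq n
        show iterHom f (K n) (x * y⁻¹) ∈ Mn G n
        obtain ⟨m, hm⟩ : ∃ m, K n = m + 1 :=
          ⟨K n - 1, (Nat.succ_pred_eq_of_pos (hK1 n)).symm⟩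
        rw [hm, iterHom_succ_apply, h1, map_one]
        exact one_mem _
      have h3 : x * y⁻¹ ∈ ⨅ n, Mn G n := mem_iInf.mpr h2
      rw [iInf_Mn_eq_bot, mem_bot, mul_inv_eq_one] at h3
      exact h3
    · -- surjective
      intro a
      have hrange : a ∈ Set.range f := by
        apply mem_closed_of_approx hG (isCompact_range hfc).isClosed
        intro n
        obtain ⟨u, v, hu, hv, huv⟩ := hdecomp n a
        have hvM : v ∈ Mn G n := hB'eq n hv
        rcases (memC n (K n) u).mp hu with ⟨w, μ, hμ, hwu⟩
        obtain ⟨m, hm⟩ : ∃ m, K n = m + 1 :=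
          ⟨K n - 1, (Nat.succ_pred_eq_of_pos (hK1 n)).symm⟩
        refine ⟨iterHom f (K n) w, ?_, ?_⟩
        · rw [hm, iterHom_succ_apply']
          exact ⟨iterHom f m w, rfl⟩
        · have ha : a = iterHom f (K n) w * μ * v := by rw [hwu, huv]
          rw [ha]
          have hexp : (iterHom f (K n) w * μ * v)⁻¹ * iterHom f (K n) w =
              v⁻¹ * μ⁻¹ := by group
          rw [hexp]
          exact mul_mem (inv_mem hvM) (inv_mem hμ)
      exact hrange


end Dich

end SumAutoAux

namespace SumAutoAux

open Subgroup

section Final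

variable {G : Type} [Group G] [TopologicalSpace G] [IsTopologicalGroup G] [CompactSpace G]
  [T2Space G] [TotallyDisconnectedSpace G]

theorem symm_continuous {F : G ≃* G} (hc : Continuous ⇑F) : Continuous ⇑F.symm :=
  (Continuous.homeoOfEquivCompactToT2 (f := F.toEquiv) hc).symm.continuous

theorem triv_of_nilpotent (hG : SmallGroup G) (f g : G →* G)
    (hfc : Continuous f) (hgc : Continuous g)
    (hfg : ∀ a : G, f a * g a = a)
    (hfnil : ∀ n, ∃ K, ∀ x : G, iterHom f K x ∈ Mn G n)
    (hgnil : ∀ n, ∃ K, ∀ x : G, iterHom g K x ∈ Mn G n) : ∀ a : G, a = 1 := by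
  intro a
  have key : ∀ n, a ∈ Mn G n := by
    intro n
    obtain ⟨Kf, hKf⟩ := hfnil n
    obtain ⟨Kg, hKg⟩ := hgnil n
    have hswap : ∀ z : G, g (f z) = f (g z) := by
      intro z
      have h1 : ∀ w : G, g w = (f w)⁻¹ * w := fun w => eq_inv_mul_of_mul_eq (hfg w)
      rw [h1 (f z), h1 z, map_mul, map_inv]
    have hcommiter : ∀ i (y : G), g (iterHom f i y) = iterHom f i (g y) := by
      intro i
      induction i with
      | zero => intro y; rfl
      | succ i ih =>
          intro y
          rw [iterHom_succ_apply, ih (f y), hswap, ← iterHom_succ_apply]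
    set S : ℕ → Subgroup G := fun j =>
      Subgroup.closure {y : G | ∃ i k x, i + k = j ∧ y = iterHom f i (iterHom g k x)} with hSdef
    have hmono : ∀ j, S j ≤ S (j+1) := by
      intro j
      apply (Subgroup.closure_le _).mpr
      rintro y ⟨i, k, x, hik, rfl⟩
      have hy : iterHom f i (iterHom g k x) =
          f (iterHom f i (iterHom g k x)) * g (iterHom f i (iterHom g k x)) := (hfg _).symm
      rw [hy]
      apply mul_mem
      · apply Subgroup.subset_closure
        exact ⟨i+1, k, x, by omega, (iterHom_succ_apply' f i _).symm⟩
      · apply Subgroup.subset_closure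
        refine ⟨i, k+1, x, by omega, ?_⟩
        rw [hcommiter, iterHom_succ_apply']
    have hSle : ∀ j, S 0 ≤ S j := by
      intro j
      induction j with
      | zero => exact le_refl _
      | succ j ih => exact le_trans ih (hmono j)
    have htop : S (Kf + Kg) ≤ Mn G n := by
      apply (Subgroup.closure_le _).mpr
      rintro y ⟨i, k, x, hik, rfl⟩
      by_cases hi : Kf ≤ i
      · obtain ⟨d, rfl⟩ := Nat.exists_eq_add_of_le hi
        rw [iterHom_add_apply]
        exact hKf _
      · have hk : Kg ≤ k := by omega
        obtain ⟨d, rfl⟩ := Nat.exists_eq_add_of_le hk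
        rw [iterHom_add_apply]
        exact iterHom_Mn_mem hfc i n (hKg _)
    have ha0 : a ∈ S 0 := Subgroup.subset_closure ⟨0, 0, a, rfl, rfl⟩
    exact htop (hSle _ ha0)
  have h2 : a ∈ ⨅ n, Mn G n := mem_iInf.mpr key
  rwa [iInf_Mn_eq_bot, mem_bot] at h2

end Final

end SumAutoAux

/-- Let `G` be a small indecomposable profinite group and `φ, ψ` normal
continuous endomorphisms of `G` whose pointwise product `a ↦ φ a * ψ a` is again an
endomorphism. If the pointwise product is a (topological) automorphism of `G`,
then `φ` or `ψ` is a (topological) automorphism of `G`. -/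
theorem sum_automorphism_implies_automorphism (G : Type) [Group G] [TopologicalSpace G]
    [IsTopologicalGroup G] [CompactSpace G] [T2Space G] [TotallyDisconnectedSpace G]
    (hG : SmallGroup G) (hind : Indecomposable G)
    (φ ψ : G →* G) (hφc : Continuous φ) (hψc : Continuous ψ)
    (hφn : ∀ a b : G, φ (a * b * a⁻¹) = a * φ b * a⁻¹)
    (hψn : ∀ a b : G, ψ (a * b * a⁻¹) = a * ψ b * a⁻¹)
    (hendo : ∀ a b : G, φ (a * b) * ψ (a * b) = (φ a * ψ a) * (φ b * ψ b))
    (hauto : ∃ e : G ≃* G, (⇑e = fun a => φ a * ψ a) ∧ Continuous e ∧ Continuous e.symm) :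
    (∃ e : G ≃* G, ⇑e = ⇑φ ∧ Continuous e ∧ Continuous e.symm) ∨
      (∃ e : G ≃* G, ⇑e = ⇑ψ ∧ Continuous e ∧ Continuous e.symm) := by
  classical
  open SumAutoAux in
  obtain ⟨e, he, hec, hesc⟩ := hauto
  have heapp : ∀ a : G, e a = φ a * ψ a := fun a => by rw [he]
  have hesymm_normal : ∀ a b : G, e.symm (a * b * a⁻¹) = a * e.symm b * a⁻¹ := by
    intro a b
    apply e.injective
    rw [MulEquiv.apply_symm_apply]
    have h1 : e (a * e.symm b * a⁻¹) = a * e (e.symm b) * a⁻¹ := by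
      rw [heapp, heapp, hφn, hψn]
      group
    rw [h1, MulEquiv.apply_symm_apply]
  set f : G →* G := φ.comp e.symm.toMonoidHom with hfdef
  set g : G →* G := ψ.comp e.symm.toMonoidHom with hgdef
  have hfapp : ∀ a : G, f a = φ (e.symm a) := fun a => rfl
  have hgapp : ∀ a : G, g a = ψ (e.symm a) := fun a => rfl
  have hfg : ∀ a : G, f a * g a = a := by
    intro a
    rw [hfapp, hgapp, ← heapp, MulEquiv.apply_symm_apply]
  have hfc2 : Continuous f := hφc.comp hesc
  have hgc2 : Continuous g := hψc.comp hesc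
  have hfn2 : ∀ a b : G, f (a * b * a⁻¹) = a * f b * a⁻¹ := by
    intro a b
    rw [hfapp, hfapp, hesymm_normal, hφn]
  have hgn2 : ∀ a b : G, g (a * b * a⁻¹) = a * g b * a⁻¹ := by
    intro a b
    rw [hgapp, hgapp, hesymm_normal, hψn]
  rcases SumAutoAux.dichotomy hG hind f hfc2 hfn2 with hfb | hfnil
  · -- φ is an automorphism
    left
    set F : G ≃* G := MulEquiv.ofBijective f hfb with hFdef
    have hFapp : ∀ a : G, F a = f a := fun a => rfl
    have hFc : Continuous ⇑F := hfc2
    refine ⟨e.trans F, ?_, ?_, ?_⟩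
    · funext a
      show F (e a) = φ a
      rw [hFapp, hfapp, MulEquiv.symm_apply_apply]
    · show Continuous fun a => F (e a)
      exact hFc.comp hec
    · show Continuous fun a => e.symm (F.symm a)
      exact hesc.comp (SumAutoAux.symm_continuous hFc)
  · rcases SumAutoAux.dichotomy hG hind g hgc2 hgn2 with hgb | hgnil
    · -- ψ is an automorphism
      right
      set F : G ≃* G := MulEquiv.ofBijective g hgb with hFdef
      have hFapp : ∀ a : G, F a = g a := fun a => rfl
      have hFc : Continuous ⇑F := hgc2
      refine ⟨e.trans F, ?_, ?_, ?_⟩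
      · funext a
        show F (e a) = ψ a
        rw [hFapp, hgapp, MulEquiv.symm_apply_apply]
      · show Continuous fun a => F (e a)
        exact hFc.comp hec
      · show Continuous fun a => e.symm (F.symm a)
        exact hesc.comp (SumAutoAux.symm_continuous hFc)
    · -- G is trivial
      have htriv : ∀ a : G, a = 1 :=
        SumAutoAux.triv_of_nilpotent hG f g hfc2 hgc2 hfg hfnil hgnil
      left
      refine ⟨MulEquiv.refl G, ?_, continuous_id, continuous_id⟩
      funext a
      show a = φ a
      exact (htriv a).trans (htriv (φ a)).symm
end

section
/- Let p be a prime and let H and K be profinite groups. If ℤ_p × ℤ_p × H is topologically isomorphic to ℤ_p × K, then K is topologically isomorphic to ℤ_p × H. -/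
open Multiplicative

section Aux
variable {p : ℕ} [Fact p.Prime]

private lemma padic_linear (f : ℤ_[p] →+ ℤ_[p]) (hf : Continuous f) (x : ℤ_[p]) :
    f x = f 1 * x := by
  have key : Set.EqOn f (fun y => f 1 * y) (Set.range (Int.cast : ℤ → ℤ_[p])) := by
    rintro _ ⟨n, rfl⟩
    have h : ((n : ℤ_[p])) = (n : ℤ) • (1 : ℤ_[p]) := by simp
    calc f (n : ℤ_[p]) = f ((n : ℤ) • (1 : ℤ_[p])) := congrArg f h
      _ = (n : ℤ) • f 1 := map_zsmul f n 1
      _ = f 1 * (n : ℤ_[p]) := by rw [zsmul_eq_mul]; ring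
  have := Continuous.ext_on (PadicInt.denseRange_intCast (p := p)) hf
    (continuous_const.mul continuous_id) key
  exact congrFun this x

private lemma mult_linear (f : Multiplicative ℤ_[p] →* Multiplicative ℤ_[p])
    (hf : Continuous f) (z : Multiplicative ℤ_[p]) :
    (f z).toAdd = (f (ofAdd 1)).toAdd * z.toAdd := by
  let F : ℤ_[p] →+ ℤ_[p] :=
    { toFun := fun x => (f (ofAdd x)).toAdd
      map_zero' := by simpa using congrArg Multiplicative.toAdd (map_one f)
      map_add' := fun a b => by
        simpa using congrArg Multiplicative.toAdd (map_mul f (ofAdd a) (ofAdd b)) }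
  have hF : Continuous F := hf
  simpa [F] using padic_linear F hF z.toAdd

private lemma unit_bijective (f : Multiplicative ℤ_[p] →* Multiplicative ℤ_[p])
    (hf : Continuous f) (hu : IsUnit (f (ofAdd 1)).toAdd) :
    Function.Bijective f := by
  set c := hu.unit with hc
  have hfz : ∀ z, (f z).toAdd = (c : ℤ_[p]) * z.toAdd := by
    intro z; rw [mult_linear f hf z, hu.unit_spec]
  constructor
  · intro a b hab
    apply Multiplicative.toAdd.injective
    have h1 : (c : ℤ_[p]) * a.toAdd = (c : ℤ_[p]) * b.toAdd := by
      rw [← hfz, ← hfz, hab]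
    calc a.toAdd = (↑c⁻¹ : ℤ_[p]) * ((c : ℤ_[p]) * a.toAdd) :=
          (Units.inv_mul_cancel_left _ _).symm
      _ = (↑c⁻¹ : ℤ_[p]) * ((c : ℤ_[p]) * b.toAdd) := by rw [h1]
      _ = b.toAdd := Units.inv_mul_cancel_left _ _
  · intro w
    refine ⟨ofAdd ((↑c⁻¹ : ℤ_[p]) * w.toAdd), ?_⟩
    apply Multiplicative.toAdd.injective
    rw [hfz]
    simp

private lemma core_cancel (W K : Type*)
    [Group W] [TopologicalSpace W] [T2Space W]
    [Group K] [TopologicalSpace K] [CompactSpace K]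
    (e : Multiplicative ℤ_[p] × W ≃* Multiplicative ℤ_[p] × K)
    (he : Continuous e) (he' : Continuous e.symm)
    (hu : Function.Bijective (fun z : Multiplicative ℤ_[p] => (e (z, 1)).1)) :
    IsTopIso K W := by
  set τ : K →* W :=
    (MonoidHom.snd _ W).comp (e.symm.toMonoidHom.comp (MonoidHom.inr _ K)) with hτ
  have hτapp : ∀ k, τ k = (e.symm (1, k)).2 := fun _ => rfl
  have hτinj : Function.Injective τ := by
    rw [injective_iff_map_eq_one]
    intro k hk
    have hx : e.symm (1, k) = ((e.symm (1, k)).1, 1) := Prod.ext rfl hk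
    have h1 : ((1 : Multiplicative ℤ_[p]), k) = e ((e.symm (1, k)).1, 1) := by
      rw [← hx, e.apply_symm_apply]
    have h2 : (fun z : Multiplicative ℤ_[p] => (e (z, 1)).1) (e.symm (1, k)).1
        = (fun z : Multiplicative ℤ_[p] => (e (z, 1)).1) 1 := by
      show (e ((e.symm (1, k)).1, 1)).1 = (e (1, 1)).1
      rw [← h1]
      have : ((1 : Multiplicative ℤ_[p]), (1 : W)) = (1 : Multiplicative ℤ_[p] × W) := rfl
      rw [this, map_one]
      rfl
    have h3 := hu.1 h2
    have h4 : ((1 : Multiplicative ℤ_[p]), k) = (1 : Multiplicative ℤ_[p] × K) := by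
      rw [h1, h3]
      have : ((1 : Multiplicative ℤ_[p]), (1 : W)) = (1 : Multiplicative ℤ_[p] × W) := rfl
      rw [this, map_one]
    exact congrArg Prod.snd h4
  have hτsurj : Function.Surjective τ := by
    intro w
    obtain ⟨s, hs⟩ := hu.2 ((e (1, w)).1)⁻¹
    refine ⟨(e ((s, w) : _ × W)).2, ?_⟩
    have hsplit : ((s, w) : Multiplicative ℤ_[p] × W) = (s, 1) * (1, w) := by
      simp
    have hs' : (e (s, 1)).1 = ((e (1, w)).1)⁻¹ := hs
    have hx1 : (e (s, w)).1 = 1 := by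
      rw [hsplit, map_mul]
      have h5 : (e (s, 1) * e (1, w)).1 = (e (s, 1)).1 * (e (1, w)).1 := rfl
      rw [h5, hs', inv_mul_cancel]
    have hx : e (s, w) = ((1 : Multiplicative ℤ_[p]), (e (s, w)).2) :=
      Prod.ext hx1 rfl
    rw [hτapp, ← hx, e.symm_apply_apply]
  let eqv := MulEquiv.ofBijective τ ⟨hτinj, hτsurj⟩
  have hcont : Continuous eqv := by
    show Continuous fun k => (e.symm (1, k)).2
    exact continuous_snd.comp (he'.comp (continuous_const.prodMk continuous_id))
  have hcont' : Continuous ⇑eqv.symm := by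
    have h2 : Continuous ⇑eqv.toEquiv := hcont
    exact (h2.homeoOfEquivCompactToT2 (f := eqv.toEquiv)).symm.continuous
  exact ⟨eqv, hcont, hcont'⟩

end Aux


/-- If `ℤ_p × ℤ_p × H ≅ ℤ_p × K` (topological isomorphism of profinite
groups, `ℤ_p` written multiplicatively), then `K ≅ ℤ_p × H`. -/
theorem padic_cancellation_double (p : ℕ) [Fact p.Prime] (H K : Type)
    [Group H] [TopologicalSpace H] [IsTopologicalGroup H] [CompactSpace H] [T2Space H]
    [TotallyDisconnectedSpace H]
    [Group K] [TopologicalSpace K] [IsTopologicalGroup K] [CompactSpace K] [T2Space K]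
    [TotallyDisconnectedSpace K]
    (h : IsTopIso (Multiplicative (PadicInt p) × Multiplicative (PadicInt p) × H)
      (Multiplicative (PadicInt p) × K)) :
    IsTopIso K (Multiplicative (PadicInt p) × H) := by
  obtain ⟨e, he, he'⟩ := h
  -- the basic continuous homomorphisms extracted from `e`
  let u₁ : Multiplicative ℤ_[p] →* Multiplicative ℤ_[p] :=
    (MonoidHom.fst _ K).comp (e.toMonoidHom.comp
      (MonoidHom.inl _ (Multiplicative ℤ_[p] × H)))
  let u₂ : Multiplicative ℤ_[p] →* Multiplicative ℤ_[p] :=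
    (MonoidHom.fst _ K).comp (e.toMonoidHom.comp
      ((MonoidHom.inr _ (Multiplicative ℤ_[p] × H)).comp
        (MonoidHom.inl (Multiplicative ℤ_[p]) H)))
  let g : H →* Multiplicative ℤ_[p] :=
    (MonoidHom.fst _ K).comp (e.toMonoidHom.comp
      ((MonoidHom.inr _ (Multiplicative ℤ_[p] × H)).comp
        (MonoidHom.inr (Multiplicative ℤ_[p]) H)))
  let h' : Multiplicative ℤ_[p] →* H :=
    (MonoidHom.snd (Multiplicative ℤ_[p]) H).comp
      ((MonoidHom.snd _ (Multiplicative ℤ_[p] × H)).comp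
        (e.symm.toMonoidHom.comp (MonoidHom.inl _ K)))
  have hu₁c : Continuous ⇑u₁ :=
    continuous_fst.comp (he.comp (continuous_id.prodMk continuous_const))
  have hu₂c : Continuous ⇑u₂ :=
    continuous_fst.comp (he.comp
      (continuous_const.prodMk (continuous_id.prodMk continuous_const)))
  have hgc : Continuous ⇑g :=
    continuous_fst.comp (he.comp
      (continuous_const.prodMk (continuous_const.prodMk continuous_id)))
  have hh'c : Continuous ⇑h' :=
    continuous_snd.comp (continuous_snd.comp
      (he'.comp (continuous_id.prodMk continuous_const)))
  -- the key decomposition identity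
  have htriple : ∀ (a b : Multiplicative ℤ_[p]) (x : H),
      ((a, b, x) : Multiplicative ℤ_[p] × Multiplicative ℤ_[p] × H)
        = (a, 1, 1) * (1, b, 1) * (1, 1, x) := by
    intro a b x
    refine Prod.ext ?_ (Prod.ext ?_ ?_) <;> simp
  have hkey : ∀ z : Multiplicative ℤ_[p],
      z = u₁ ((e.symm (z, 1)).1) * u₂ ((e.symm (z, 1)).2.1) * g ((e.symm (z, 1)).2.2) := by
    intro z
    have h0 : z = (e (e.symm (z, 1))).1 := by rw [e.apply_symm_apply]
    have hsplit : e.symm (z, 1) =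
        ((e.symm (z, 1)).1, 1, 1) * (1, (e.symm (z, 1)).2.1, 1)
          * (1, 1, (e.symm (z, 1)).2.2) :=
      htriple _ _ _
    conv_lhs => rw [h0, hsplit]
    rw [map_mul, map_mul]
    rfl
  have hid : (1 : ℤ_[p]) = (u₁ ((e.symm (ofAdd 1, 1)).1)).toAdd
      + (u₂ ((e.symm (ofAdd 1, 1)).2.1)).toAdd + (g (h' (ofAdd 1))).toAdd := by
    have := congrArg Multiplicative.toAdd (hkey (ofAdd 1))
    simpa [h'] using this
  by_cases hc₁ : IsUnit (u₁ (ofAdd 1)).toAdd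
  · exact core_cancel (Multiplicative ℤ_[p] × H) K e he he' (unit_bijective u₁ hu₁c hc₁)
  by_cases hc₂ : IsUnit (u₂ (ofAdd 1)).toAdd
  · let sw : Multiplicative ℤ_[p] × Multiplicative ℤ_[p] × H ≃*
        Multiplicative ℤ_[p] × Multiplicative ℤ_[p] × H :=
      { toFun := fun x => (x.2.1, x.1, x.2.2)
        invFun := fun x => (x.2.1, x.1, x.2.2)
        left_inv := fun x => rfl
        right_inv := fun x => rfl
        map_mul' := fun x y => rfl }
    have hswc : Continuous ⇑sw :=
      (continuous_fst.comp continuous_snd).prodMk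
        (continuous_fst.prodMk (continuous_snd.comp continuous_snd))
    refine core_cancel (Multiplicative ℤ_[p] × H) K (sw.trans e) (he.comp hswc)
      (hswc.comp he') (unit_bijective u₂ hu₂c hc₂)
  · -- both coefficients are non-units, so `g ∘ h'` is an automorphism
    have hA : ¬IsUnit ((u₁ ((e.symm (ofAdd 1, 1)).1)).toAdd) := by
      intro hA
      rw [mult_linear u₁ hu₁c] at hA
      exact hc₁ (isUnit_of_mul_isUnit_left hA)
    have hB : ¬IsUnit ((u₂ ((e.symm (ofAdd 1, 1)).2.1)).toAdd) := by
      intro hB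
      rw [mult_linear u₂ hu₂c] at hB
      exact hc₂ (isUnit_of_mul_isUnit_left hB)
    have ht : IsUnit ((g (h' (ofAdd 1))).toAdd) := by
      by_contra hC
      have h6 := IsLocalRing.nonunits_add (IsLocalRing.nonunits_add (mem_nonunits_iff.mpr hA)
        (mem_nonunits_iff.mpr hB)) (mem_nonunits_iff.mpr hC)
      rw [← hid] at h6
      exact one_notMem_nonunits h6
    -- centrality of the image of h'
    have hcomm : ∀ (z : Multiplicative ℤ_[p])
        (y : Multiplicative ℤ_[p] × Multiplicative ℤ_[p] × H),
        e.symm (z, 1) * y = y * e.symm (z, 1) := by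
      intro z y
      apply e.injective
      rw [map_mul, map_mul, e.apply_symm_apply]
      refine Prod.ext ?_ ?_
      · show z * (e y).1 = (e y).1 * z
        exact mul_comm _ _
      · show (1 : K) * (e y).2 = (e y).2 * 1
        rw [one_mul, mul_one]
    have hcentral : ∀ (z : Multiplicative ℤ_[p]) (x : H), Commute (h' z) x := by
      intro z x
      exact congrArg (fun a : Multiplicative ℤ_[p] × Multiplicative ℤ_[p] × H => a.2.2)
        (hcomm z (1, 1, x))
    have hthc : Continuous ⇑(g.comp h') := hgc.comp hh'c
    have hgh : ∀ z : Multiplicative ℤ_[p],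
        (g (h' z)).toAdd = (g (h' (ofAdd 1))).toAdd * z.toAdd :=
      fun z => mult_linear (g.comp h') hthc z
    set T := ht.unit with hT
    have hTc : (T : ℤ_[p]) = (g (h' (ofAdd 1))).toAdd := ht.unit_spec
    -- the scalar hom and the idempotent π
    let sm : Multiplicative ℤ_[p] →* Multiplicative ℤ_[p] :=
      AddMonoidHom.toMultiplicative (AddMonoidHom.mulLeft (↑T⁻¹ : ℤ_[p]))
    have hsmc : Continuous ⇑sm := by
      show Continuous fun x : Multiplicative ℤ_[p] => ofAdd ((↑T⁻¹ : ℤ_[p]) * x.toAdd)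
      exact continuous_ofAdd.comp (continuous_const.mul continuous_toAdd)
    let π : H →* H := h'.comp (sm.comp g)
    have hπapp : ∀ x, π x = h' (ofAdd ((↑T⁻¹ : ℤ_[p]) * (g x).toAdd)) := fun _ => rfl
    have hπcont : Continuous ⇑π := hh'c.comp (hsmc.comp hgc)
    have hπc : ∀ (x : H) (y : H), Commute (π x) y := fun x y => hcentral _ y
    have hgπ : ∀ x, g (π x) = g x := by
      intro x
      apply Multiplicative.toAdd.injective
      show (g (h' (ofAdd ((↑T⁻¹ : ℤ_[p]) * (g x).toAdd)))).toAdd = (g x).toAdd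
      rw [hgh, toAdd_ofAdd, ← hTc, Units.mul_inv_cancel_left]
    have hmem : ∀ x, x * (π x)⁻¹ ∈ g.ker := by
      intro x
      rw [MonoidHom.mem_ker, map_mul, map_inv, hgπ, mul_inv_cancel]
    have hgval : ∀ (z : Multiplicative ℤ_[p]) (y : ↥g.ker),
        (g (h' z * ↑y)).toAdd = (↑T : ℤ_[p]) * z.toAdd := by
      intro z y
      have hy : g ↑y = 1 := MonoidHom.mem_ker.mp y.2
      rw [map_mul, toAdd_mul, hgh, hy, toAdd_one, add_zero, hTc]
    -- the splitting H ≅ ℤ_p × ker g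
    let φ : H ≃* Multiplicative ℤ_[p] × ↥g.ker :=
      { toFun := fun x => (ofAdd ((↑T⁻¹ : ℤ_[p]) * (g x).toAdd), ⟨x * (π x)⁻¹, hmem x⟩)
        invFun := fun zy => h' zy.1 * ↑zy.2
        left_inv := fun x => by
          show h' (ofAdd ((↑T⁻¹ : ℤ_[p]) * (g x).toAdd)) * (x * (π x)⁻¹) = x
          rw [← hπapp]
          have h8 := (hπc x x).eq
          calc π x * (x * (π x)⁻¹) = π x * x * (π x)⁻¹ := by group
            _ = x * π x * (π x)⁻¹ := by rw [h8]
            _ = x := by group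
        right_inv := fun zy => by
          obtain ⟨z, y⟩ := zy
          have h9 : π (h' z * ↑y) = h' z := by
            have h10 : sm (g (h' z * ↑y)) = z := by
              apply Multiplicative.toAdd.injective
              show (↑T⁻¹ : ℤ_[p]) * (g (h' z * ↑y)).toAdd = z.toAdd
              rw [hgval, Units.inv_mul_cancel_left]
            show h' (sm (g (h' z * ↑y))) = h' z
            rw [h10]
          refine Prod.ext ?_ (Subtype.ext ?_)
          · show ofAdd ((↑T⁻¹ : ℤ_[p]) * (g (h' z * ↑y)).toAdd) = z
            rw [hgval, Units.inv_mul_cancel_left, ofAdd_toAdd]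
          · show (h' z * ↑y) * (π (h' z * ↑y))⁻¹ = ↑y
            rw [h9]
            have h11 := (hcentral z ↑y).eq
            calc h' z * ↑y * (h' z)⁻¹ = h' z * ↑y * (h' z)⁻¹ := rfl
              _ = ↑y * h' z * (h' z)⁻¹ := by rw [← h11]
              _ = ↑y := by group
        map_mul' := fun a b => by
          refine Prod.ext ?_ (Subtype.ext ?_)
          · show ofAdd ((↑T⁻¹ : ℤ_[p]) * (g (a * b)).toAdd)
              = ofAdd ((↑T⁻¹ : ℤ_[p]) * (g a).toAdd) * ofAdd ((↑T⁻¹ : ℤ_[p]) * (g b).toAdd)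
            rw [map_mul g a b, toAdd_mul, mul_add, ofAdd_add]
          · show (a * b) * (π (a * b))⁻¹ = (a * (π a)⁻¹) * (b * (π b)⁻¹)
            rw [map_mul π]
            have h11 := ((hπc a (b * (π b)⁻¹)).inv_left).eq
            calc a * b * (π a * π b)⁻¹ = a * ((b * (π b)⁻¹) * (π a)⁻¹) := by group
              _ = a * ((π a)⁻¹ * (b * (π b)⁻¹)) := by rw [h11]
              _ = a * (π a)⁻¹ * (b * (π b)⁻¹) := by group }
    have hφc : Continuous ⇑φ :=
      (continuous_ofAdd.comp (continuous_const.mul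
        (continuous_toAdd.comp hgc))).prodMk
        ((continuous_id.mul (hπcont.inv)).subtype_mk _)
    have hφc' : Continuous ⇑φ.symm :=
      (hh'c.comp continuous_fst).mul (continuous_subtype_val.comp continuous_snd)
    -- the rearranged isomorphism
    let σ : Multiplicative ℤ_[p] ×
          (Multiplicative ℤ_[p] × Multiplicative ℤ_[p] × ↥g.ker) ≃*
        Multiplicative ℤ_[p] × Multiplicative ℤ_[p] × H :=
      { toFun := fun x => (x.2.1, x.2.2.1, φ.symm (x.1, x.2.2.2))
        invFun := fun x => ((φ x.2.2).1, x.1, x.2.1, (φ x.2.2).2)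
        left_inv := fun x => by
          show ((φ (φ.symm (x.1, x.2.2.2))).1, x.2.1, x.2.2.1,
            (φ (φ.symm (x.1, x.2.2.2))).2) = x
          rw [φ.apply_symm_apply]
        right_inv := fun x => by
          show (x.1, x.2.1, φ.symm ((φ x.2.2).1, (φ x.2.2).2)) = x
          have h13 : (((φ x.2.2).1, (φ x.2.2).2) :
              Multiplicative ℤ_[p] × ↥g.ker) = φ x.2.2 := rfl
          rw [h13, φ.symm_apply_apply]
        map_mul' := fun x y => by
          refine Prod.ext rfl (Prod.ext rfl ?_)
          show φ.symm ((x.1, x.2.2.2) * (y.1, y.2.2.2)) = _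
          exact map_mul φ.symm _ _ }
    have hq : Continuous fun x : Multiplicative ℤ_[p] × Multiplicative ℤ_[p] × H =>
        φ x.2.2 := hφc.comp (continuous_snd.comp continuous_snd)
    have hσc : Continuous ⇑σ :=
      (continuous_fst.comp continuous_snd).prodMk
        ((continuous_fst.comp (continuous_snd.comp continuous_snd)).prodMk
          (hφc'.comp (continuous_fst.prodMk
            (continuous_snd.comp (continuous_snd.comp continuous_snd)))))
    have hσc' : Continuous ⇑σ.symm :=
      (continuous_fst.comp hq).prodMk
        (continuous_fst.prodMk
          ((continuous_fst.comp continuous_snd).prodMk (continuous_snd.comp hq)))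
    have hEc : Continuous ⇑(σ.trans e) := he.comp hσc
    have hEc' : Continuous ⇑(σ.trans e).symm := hσc'.comp he'
    -- the new first-coordinate map is bijective
    have hbij : Function.Bijective
        (fun z : Multiplicative ℤ_[p] => ((σ.trans e) (z, 1)).1) := by
      have h16 : IsUnit (((g.comp (φ.symm.toMonoidHom.comp
          (MonoidHom.inl (Multiplicative ℤ_[p]) ↥g.ker))) (ofAdd 1)).toAdd) := by
        have h17 : (g.comp (φ.symm.toMonoidHom.comp
            (MonoidHom.inl (Multiplicative ℤ_[p]) ↥g.ker))) (ofAdd 1)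
            = g (h' (ofAdd 1)) := by
          show g (h' (ofAdd (1 : ℤ_[p])) * ↑(1 : ↥g.ker)) = g (h' (ofAdd 1))
          rw [OneMemClass.coe_one, mul_one]
        rw [h17]
        exact ht
      exact unit_bijective
        (g.comp (φ.symm.toMonoidHom.comp (MonoidHom.inl (Multiplicative ℤ_[p]) ↥g.ker)))
        (hgc.comp (hφc'.comp (continuous_id.prodMk continuous_const))) h16
    obtain ⟨ι, hι, hι'⟩ := core_cancel
      (Multiplicative ℤ_[p] × Multiplicative ℤ_[p] × ↥g.ker) K (σ.trans e) hEc hEc' hbij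
    let ψ : Multiplicative ℤ_[p] × Multiplicative ℤ_[p] × ↥g.ker ≃*
        Multiplicative ℤ_[p] × H :=
      { toFun := fun x => (x.1, φ.symm x.2)
        invFun := fun x => (x.1, φ x.2)
        left_inv := fun x => by
          show (x.1, φ (φ.symm x.2)) = x
          rw [φ.apply_symm_apply]
        right_inv := fun x => by
          show (x.1, φ.symm (φ x.2)) = x
          rw [φ.symm_apply_apply]
        map_mul' := fun x y => Prod.ext rfl (map_mul φ.symm _ _) }
    refine ⟨ι.trans ψ, ?_, ?_⟩
    · exact (continuous_fst.prodMk (hφc'.comp continuous_snd)).comp hι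
    · exact hι'.comp (continuous_fst.prodMk (hφc.comp continuous_snd))
end

section
/- Let p be a prime and let G_1, G_2 be abelian profinite groups. If ℤ_p × G_1 is topologically isomorphic to ℤ_p × G_2, then G_1 is topologically isomorphic to G_2. -/
open Multiplicative


lemma padic_endo_scalar {p : ℕ} [Fact p.Prime]
    (f : Multiplicative (PadicInt p) →* Multiplicative (PadicInt p)) (hf : Continuous f)
    (x : PadicInt p) :
    f (ofAdd x) = ofAdd (toAdd (f (ofAdd 1)) * x) := by
  have key : (fun x : PadicInt p => toAdd (f (ofAdd x)))
      = fun x => toAdd (f (ofAdd 1)) * x := by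
    refine PadicInt.denseRange_natCast.equalizer
      (continuous_toAdd.comp (hf.comp continuous_ofAdd)) (by continuity) ?_
    funext n
    show toAdd (f (ofAdd ((n : ℕ) : PadicInt p))) = toAdd (f (ofAdd 1)) * ((n : ℕ) : PadicInt p)
    induction n with
    | zero => simp
    | succ k ih =>
      push_cast
      rw [ofAdd_add, map_mul, toAdd_mul, ih]
      ring
  have h2 := congrFun key x
  rw [← h2, ofAdd_toAdd]

section Main

variable {p : ℕ} [Fact p.Prime] {G₁ G₂ : Type}
    [CommGroup G₁] [TopologicalSpace G₁] [IsTopologicalGroup G₁] [CompactSpace G₁] [T2Space G₁]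
    [CommGroup G₂] [TopologicalSpace G₂] [IsTopologicalGroup G₂] [CompactSpace G₂] [T2Space G₂]

local notation "A" => Multiplicative (PadicInt p)

lemma main_aux (e : (Multiplicative (PadicInt p) × G₁) ≃* (Multiplicative (PadicInt p) × G₂))
    (hec : Continuous e) (hec' : Continuous e.symm) :
    ∃ θ : G₁ ≃* G₂, Continuous θ ∧ Continuous θ.symm := by
  -- component homomorphisms
  let α : A →* A := (MonoidHom.fst A G₂).comp (e.toMonoidHom.comp (MonoidHom.inl A G₁))
  let β : G₁ →* A := (MonoidHom.fst A G₂).comp (e.toMonoidHom.comp (MonoidHom.inr A G₁))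
  let γ : A →* G₂ := (MonoidHom.snd A G₂).comp (e.toMonoidHom.comp (MonoidHom.inl A G₁))
  let δ : G₁ →* G₂ := (MonoidHom.snd A G₂).comp (e.toMonoidHom.comp (MonoidHom.inr A G₁))
  let α' : A →* A := (MonoidHom.fst A G₁).comp (e.symm.toMonoidHom.comp (MonoidHom.inl A G₂))
  let β' : G₂ →* A := (MonoidHom.fst A G₁).comp (e.symm.toMonoidHom.comp (MonoidHom.inr A G₂))
  let γ' : A →* G₁ := (MonoidHom.snd A G₁).comp (e.symm.toMonoidHom.comp (MonoidHom.inl A G₂))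
  let δ' : G₂ →* G₁ := (MonoidHom.snd A G₁).comp (e.symm.toMonoidHom.comp (MonoidHom.inr A G₂))
  have he : ∀ (a : A) (g : G₁), e (a, g) = (α a * β g, γ a * δ g) := by
    intro a g
    rw [show ((a, g) : A × G₁) = (a, 1) * (1, g) by simp, map_mul]
    rfl
  have he' : ∀ (b : A) (h : G₂), e.symm (b, h) = (α' b * β' h, γ' b * δ' h) := by
    intro b h
    rw [show ((b, h) : A × G₂) = (b, 1) * (1, h) by simp, map_mul]
    rfl
  -- the eight identities
  have key1 : ∀ a : A, (α' (α a) * β' (γ a), γ' (α a) * δ' (γ a)) = ((a, 1) : A × G₁) := by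
    intro a
    have h0 : e (a, 1) = (α a, γ a) := by rw [he]; simp
    have h1 := e.symm_apply_apply (a, (1 : G₁))
    rw [h0, he'] at h1
    exact h1
  have key2 : ∀ g : G₁, (α' (β g) * β' (δ g), γ' (β g) * δ' (δ g)) = ((1, g) : A × G₁) := by
    intro g
    have h0 : e (1, g) = (β g, δ g) := by rw [he]; simp
    have h1 := e.symm_apply_apply ((1 : A), g)
    rw [h0, he'] at h1
    exact h1
  have key3 : ∀ b : A, (α (α' b) * β (γ' b), γ (α' b) * δ (γ' b)) = ((b, 1) : A × G₂) := by
    intro b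
    have h0 : e.symm (b, 1) = (α' b, γ' b) := by rw [he']; simp
    have h1 := e.apply_symm_apply (b, (1 : G₂))
    rw [h0, he] at h1
    exact h1
  have key4 : ∀ h : G₂, (α (β' h) * β (δ' h), γ (β' h) * δ (δ' h)) = ((1, h) : A × G₂) := by
    intro h
    have h0 : e.symm (1, h) = (β' h, δ' h) := by rw [he']; simp
    have h1 := e.apply_symm_apply ((1 : A), h)
    rw [h0, he] at h1
    exact h1
  -- continuity of the components
  have hαc : Continuous α := continuous_fst.comp (hec.comp (continuous_id.prodMk continuous_const))
  have hβc : Continuous β := continuous_fst.comp (hec.comp (continuous_const.prodMk continuous_id))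
  have hγc : Continuous γ := continuous_snd.comp (hec.comp (continuous_id.prodMk continuous_const))
  have hδc : Continuous δ := continuous_snd.comp (hec.comp (continuous_const.prodMk continuous_id))
  have hα'c : Continuous α' :=
    continuous_fst.comp (hec'.comp (continuous_id.prodMk continuous_const))
  have hβ'c : Continuous β' :=
    continuous_fst.comp (hec'.comp (continuous_const.prodMk continuous_id))
  -- scalars
  set c : PadicInt p := toAdd (α (ofAdd 1)) with hc_def
  set c' : PadicInt p := toAdd (α' (ofAdd 1)) with hc'_def
  set d : PadicInt p := toAdd ((β'.comp γ) (ofAdd 1)) with hd_def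
  set d₂ : PadicInt p := toAdd ((β.comp γ') (ofAdd 1)) with hd₂_def
  have hα : ∀ x, α (ofAdd x) = ofAdd (c * x) := fun x => padic_endo_scalar α hαc x
  have hα' : ∀ x, α' (ofAdd x) = ofAdd (c' * x) := fun x => padic_endo_scalar α' hα'c x
  have hβ'γ : ∀ x, β' (γ (ofAdd x)) = ofAdd (d * x) := fun x =>
    padic_endo_scalar (β'.comp γ) (hβ'c.comp hγc) x
  have hβγ' : ∀ x, β (γ' (ofAdd x)) = ofAdd (d₂ * x) := by
    intro x
    have hγ'c : Continuous γ' :=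
      continuous_snd.comp (hec'.comp (continuous_id.prodMk continuous_const))
    exact padic_endo_scalar (β.comp γ') (hβc.comp hγ'c) x
  -- the two trace identities
  have hsum1 : c' * c + d = 1 := by
    have h1 := congrArg Prod.fst (key1 (ofAdd 1))
    simp only at h1
    rw [hα 1, hα' (c * 1)] at h1
    have h2 : β' (γ (ofAdd (1 : PadicInt p))) = ofAdd (d * 1) := hβ'γ 1
    rw [h2, ← ofAdd_add] at h1
    have := ofAdd.injective h1
    linear_combination this
  have hsum2 : c * c' + d₂ = 1 := by
    have h1 := congrArg Prod.fst (key3 (ofAdd 1))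
    simp only at h1
    rw [hα' 1, hα (c' * 1)] at h1
    have h2 : β (γ' (ofAdd (1 : PadicInt p))) = ofAdd (d₂ * 1) := hβγ' 1
    rw [h2, ← ofAdd_add] at h1
    have := ofAdd.injective h1
    linear_combination this
  have hdd : d₂ = d := by linear_combination hsum2 - hsum1
  -- choose t with c' - d * t a unit
  obtain ⟨t, hu⟩ : ∃ t : PadicInt p, IsUnit (c' - d * t) := by
    rcases IsLocalRing.isUnit_or_isUnit_of_add_one hsum1 with hcc | hdu
    · have hcu : IsUnit c := isUnit_of_mul_isUnit_right hcc
      refine ⟨-(↑hcu.unit⁻¹ : PadicInt p), ?_⟩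
      have hinv : (↑hcu.unit⁻¹ : PadicInt p) * c = 1 := by
        have := hcu.unit.inv_mul
        rwa [hcu.unit_spec] at this
      exact IsUnit.of_mul_eq_one c (by linear_combination hsum1 + d * hinv)
    · refine ⟨(↑hdu.unit⁻¹ : PadicInt p) * (1 + c'), ?_⟩
      have hinv : d * (↑hdu.unit⁻¹ : PadicInt p) = 1 := by
        have := hdu.unit.mul_inv
        rwa [hdu.unit_spec] at this
      have h3 : c' - d * ((↑hdu.unit⁻¹ : PadicInt p) * (1 + c')) = -1 := by
        linear_combination (-(1 + c')) * hinv
      rw [h3]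
      exact isUnit_one.neg
  have hvinv : (↑hu.unit⁻¹ : PadicInt p) * (c' - d * t) = 1 := by
    have := hu.unit.inv_mul
    rwa [hu.unit_spec] at this
  set s : PadicInt p := -(1 + t * c) * (↑hu.unit⁻¹ : PadicInt p) with hs_def
  have hs : s * (t * d - c') = 1 + t * c := by
    rw [hs_def]
    linear_combination (1 + t * c) * hvinv
  -- the candidate isomorphism
  let θ : G₁ →* G₂ :=
    { toFun := fun g => γ (ofAdd (t * toAdd (β g))) * δ g
      map_one' := by simp
      map_mul' := by
        intro g₁ g₂
        simp only [map_mul, toAdd_mul, mul_add, ofAdd_add]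
        rw [mul_mul_mul_comm] }
  have hθc : Continuous θ := by
    refine Continuous.mul (hγc.comp ?_) hδc
    exact continuous_ofAdd.comp (continuous_const.mul (continuous_toAdd.comp hβc))
  -- injectivity
  have hinj : Function.Injective θ := by
    refine (injective_iff_map_eq_one θ).mpr ?_
    intro g hg
    have hgx : θ g = γ (ofAdd (t * toAdd (β g))) * δ g := rfl
    set x : PadicInt p := toAdd (β g) with hx_def
    have hβg : β g = ofAdd x := (ofAdd_toAdd _).symm
    rw [hgx] at hg
    have hδg : δ g = (γ (ofAdd (t * x)))⁻¹ := eq_inv_of_mul_eq_one_right hg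
    -- extract the first component of key2
    have k3 : α' (β g) * β' (δ g) = 1 := congrArg Prod.fst (key2 g)
    have k4 : γ' (β g) * δ' (δ g) = g := congrArg Prod.snd (key2 g)
    rw [hβg, hδg, hα', map_inv, hβ'γ] at k3
    have hx0 : x = 0 := by
      have h1 : ofAdd (c' * x - d * (t * x)) = (1 : A) := by
        rw [ofAdd_sub, div_eq_mul_inv]
        exact k3
      have h2 : c' * x - d * (t * x) = 0 := by
        have := ofAdd.injective (h1.trans (ofAdd_zero).symm)
        exact this
      calc x = ((↑hu.unit⁻¹ : PadicInt p) * (c' - d * t)) * x := by rw [hvinv, one_mul]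
        _ = (↑hu.unit⁻¹ : PadicInt p) * (c' * x - d * (t * x)) := by ring
        _ = 0 := by rw [h2, mul_zero]
    rw [hβg, hδg, hx0] at k4
    simpa using k4.symm
  -- surjectivity
  have hsurj : Function.Surjective θ := by
    intro h
    set y : PadicInt p := toAdd (β' h) with hy_def
    have hβ'h : β' h = ofAdd y := (ofAdd_toAdd _).symm
    refine ⟨γ' (ofAdd (s * y)) * δ' h, ?_⟩
    -- compute β of the candidate
    have k7 : α (β' h) * β (δ' h) = 1 := congrArg Prod.fst (key4 h)
    have k8 : γ (β' h) * δ (δ' h) = h := congrArg Prod.snd (key4 h)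
    have k6 : γ (α' (ofAdd (s * y))) * δ (γ' (ofAdd (s * y))) = 1 :=
      congrArg Prod.snd (key3 (ofAdd (s * y)))
    rw [hβ'h, hα] at k7
    rw [hβ'h] at k8
    rw [hα'] at k6
    have hbδ' : β (δ' h) = ofAdd (-(c * y)) :=
      by rw [ofAdd_neg]; exact eq_inv_of_mul_eq_one_right k7
    have hδγ' : δ (γ' (ofAdd (s * y))) = (γ (ofAdd (c' * (s * y))))⁻¹ :=
      eq_inv_of_mul_eq_one_right k6
    have hδδ' : δ (δ' h) = (γ (ofAdd y))⁻¹ * h := by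
      rw [eq_inv_mul_iff_mul_eq]
      exact k8
    have hβcand : β (γ' (ofAdd (s * y)) * δ' h) = ofAdd (d₂ * (s * y) + -(c * y)) := by
      rw [map_mul, hβγ', hbδ', ofAdd_add]
    show γ (ofAdd (t * toAdd (β (γ' (ofAdd (s * y)) * δ' h)))) *
        δ (γ' (ofAdd (s * y)) * δ' h) = h
    rw [hβcand, toAdd_ofAdd, map_mul δ, hδγ', hδδ']
    have hE : t * (d₂ * (s * y) + -(c * y)) + (-(c' * (s * y)) + -y) = 0 := by
      linear_combination y * hs + (t * (s * y)) * hdd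
    calc γ (ofAdd (t * (d₂ * (s * y) + -(c * y)))) *
          ((γ (ofAdd (c' * (s * y))))⁻¹ * ((γ (ofAdd y))⁻¹ * h))
        = γ (ofAdd (t * (d₂ * (s * y) + -(c * y)) + (-(c' * (s * y)) + -y))) * h := by
          simp only [ofAdd_add, ofAdd_neg, map_mul, map_inv, mul_assoc]
      _ = h := by rw [hE, ofAdd_zero, map_one, one_mul]
  -- conclude
  have hbij : Function.Bijective θ := ⟨hinj, hsurj⟩
  refine ⟨MulEquiv.ofBijective θ hbij, hθc, ?_⟩
  exact (Continuous.homeoOfEquivCompactToT2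
    (f := (MulEquiv.ofBijective θ hbij).toEquiv) hθc).symm.continuous

end Main

/-- `ℤ_p` can be cancelled from direct products of abelian profinite
groups: if `ℤ_p × G₁ ≅ ℤ_p × G₂` with `G₁, G₂` abelian profinite, then `G₁ ≅ G₂`. -/
theorem padic_cancellation_abelian (p : ℕ) [Fact p.Prime] (G₁ G₂ : Type)
    [CommGroup G₁] [TopologicalSpace G₁] [IsTopologicalGroup G₁] [CompactSpace G₁] [T2Space G₁]
    [TotallyDisconnectedSpace G₁]
    [CommGroup G₂] [TopologicalSpace G₂] [IsTopologicalGroup G₂] [CompactSpace G₂] [T2Space G₂]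
    [TotallyDisconnectedSpace G₂]
    (h : IsTopIso (Multiplicative (PadicInt p) × G₁) (Multiplicative (PadicInt p) × G₂)) :
    IsTopIso G₁ G₂ := by
  obtain ⟨e, hec, hec'⟩ := h
  exact main_aux e hec hec'
end

section
/- Let G be a small profinite group and suppose G is topologically isomorphic to a direct product ∏_{i∈I} G_i of profinite groups in which every factor G_i is nontrivial. Then the index set I is at most countable. -/
lemma exists_proper_open_normal (A : Type*) [Group A] [TopologicalSpace A]
    [IsTopologicalGroup A] [CompactSpace A] [T2Space A] [TotallyDisconnectedSpace A]
    [Nontrivial A] :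
    ∃ N : Subgroup A, N.Normal ∧ IsOpen (N : Set A) ∧ N ≠ ⊤ := by
  obtain ⟨g, hg⟩ := exists_ne (1 : A)
  have : TotallySeparatedSpace A := loc_compact_t2_tot_disc_iff_tot_sep.mp inferInstance
  obtain ⟨W, hW, h1W, hgW⟩ := exists_isClopen_of_totally_separated (Ne.symm hg)
  obtain ⟨H, hH⟩ := IsTopologicalGroup.exist_openNormalSubgroup_sub_clopen_nhds_of_one hW h1W
  refine ⟨H.toSubgroup, H.isNormal', H.isOpen, fun ht => hgW (hH ?_)⟩
  show g ∈ H.toSubgroup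
  rw [ht]; trivial

/-- If a small profinite group is topologically isomorphic to a direct
product of nontrivial profinite groups, then the index set is at most countable. -/
theorem smallProfinite_product_index_countable (G : Type) [Group G] [TopologicalSpace G]
    [IsTopologicalGroup G] [CompactSpace G] [T2Space G] [TotallyDisconnectedSpace G]
    (hG : SmallGroup G) (I : Type) (F : I → ProfiniteGroup)
    (hnt : ∀ i, Nontrivial (F i).carrier)
    (h : IsTopIso G (∀ i, (F i).carrier)) :
    Countable I := by
  classical
  obtain ⟨e, he, he'⟩ := h
  choose N hNnorm hNopen hNne using fun i => exists_proper_open_normal (F i).carrier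
  -- the pullback to the product
  set P := ∀ j, (F j).carrier with hP
  have hevalcont : ∀ i, Continuous (Pi.evalMonoidHom (fun j => (F j).carrier) i) :=
    fun i => continuous_apply i
  set Hs : I → Subgroup P := fun i => (N i).comap (Pi.evalMonoidHom (fun j => (F j).carrier) i)
    with hHs
  have hHsinj : Function.Injective Hs := by
    intro i j hij
    by_contra hne
    obtain ⟨g, hg⟩ : ∃ g : (F j).carrier, g ∉ N j := by
      by_contra hall
      push_neg at hall
      exact hNne j ((Subgroup.eq_top_iff' (N j)).mpr hall)
    set x : P := Function.update (1 : P) j g with hx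
    have hxi : x ∈ Hs i := by
      show x i ∈ N i
      have : x i = 1 := Function.update_of_ne hne g (1 : P)
      rw [this]; exact (N i).one_mem
    rw [hij] at hxi
    have : x j = g := Function.update_self j g (1 : P)
    exact hg (this ▸ hxi)
  set K : I → Subgroup G := fun i => (Hs i).comap e.toMonoidHom with hK
  have hKinj : Function.Injective K := fun i j hij =>
    hHsinj (Subgroup.comap_injective e.surjective hij)
  have hKnorm : ∀ i, (K i).Normal := fun i =>
    Subgroup.Normal.comap (Subgroup.Normal.comap (hNnorm i) _) _
  have hKopen : ∀ i, IsOpen ((K i) : Set G) := fun i =>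
    ((hNopen i).preimage (hevalcont i)).preimage he
  set T : Set (Subgroup G) :=
    ⋃ n : ℕ, {H : Subgroup G | H.Normal ∧ IsOpen (H : Set G) ∧ H.index = n} with hT
  have hTc : T.Countable := Set.countable_iUnion fun n => (hG n).countable
  have := hTc.to_subtype
  refine Countable.of_equiv _ (Equiv.ofInjective (fun i => (⟨K i, ?_⟩ : T)) ?_).symm
  · exact Set.mem_iUnion.mpr ⟨(K i).index, hKnorm i, hKopen i, rfl⟩
  · intro i j hij
    exact hKinj (congrArg Subtype.val hij)
end
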